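/- Let k ≥ 3 and let P ⊆ S² be a set of k points in general position with P̂ = P ∪ (−P). Suppose that for each p ∈ P a half-circle H_p with endpoints p and −p is chosen so that the half-circles H_p (p ∈ P) are pairwise disjoint and the great circle containing each H_p meets P̂ only in {p, −p}. Consider the drawing whose curves are: the arcs arc(a,b) for all edges {a,b} of P̂, and the half-circles H_p for p ∈ P. Then the total number of crossing pairs of curves (unordered pairs of distinct curves that share a point which is not an endpoint of either curve) equals (1/4)·k(k−1)²(k−2) = H(2k). -/

import Mathlib

open Set
open scoped RealInnerProductSpace

noncomputable section

/-- Three-dimensional Euclidean space. -/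
abbrev E3 : Type := EuclideanSpace ℝ (Fin 3)

/-- The unit sphere `S²` in `ℝ³`. -/
def unitSphere : Set E3 := {x | ‖x‖ = 1}

/-- The geodesic arc from `p` to `q`: the radial projection onto the sphere of the
straight segment from `p` to `q`. -/
def arc (p q : E3) : Set E3 :=
  {x | ∃ t ∈ Icc (0 : ℝ) 1, x = ‖(1 - t) • p + t • q‖⁻¹ • ((1 - t) • p + t • q)}

/-- The half-circle with endpoints `p` and `-p` determined by a direction `v`. -/
def halfCircle (p v : E3) : Set E3 :=
  {x | ∃ t ∈ Icc (0 : ℝ) Real.pi, x = Real.cos t • p + Real.sin t • v}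

/-- A set of points is in general position if every three distinct points of it are
linearly independent. -/
def GenPos (P : Set E3) : Prop :=
  ∀ a ∈ P, ∀ b ∈ P, ∀ c ∈ P, a ≠ b → a ≠ c → b ≠ c → LinearIndependent ℝ ![a, b, c]

/-- `P̂ = P ∪ (-P)`: the set `P` together with the antipodes of its points. -/
def phat (P : Set E3) : Set E3 := P ∪ (fun x => -x) '' P

/-- The edges of a vertex set `V`: unordered pairs `{a, b}` of points of `V`
with `b ∉ {a, -a}`. -/
def edges (V : Set E3) : Set (Sym2 E3) :=
  {e | ∃ a b, a ∈ V ∧ b ∈ V ∧ b ≠ a ∧ b ≠ -a ∧ e = s(a, b)}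

/-- A curve of a drawing: a subset of the sphere together with its set of endpoints. -/
abbrev Curve : Type := Set E3 × Set E3

/-- The curves of the drawing determined by `P`: the geodesic arcs `arc a b` for all
edges `{a, b}` of `P̂`, together with the half-circles `halfCircle p (v p)` joining
`p` and `-p` for `p ∈ P'`. -/
def drawingCurves (P : Set E3) (v : E3 → E3) (P' : Set E3) : Set Curve :=
  {c | (∃ a b, a ∈ phat P ∧ b ∈ phat P ∧ b ≠ a ∧ b ≠ -a ∧
          c = (arc a b, ({a, b} : Set E3))) ∨
       (∃ p ∈ P', c = (halfCircle p (v p), ({p, -p} : Set E3)))}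

/-- The crossing pairs of a drawing: unordered pairs of distinct curves sharing a point
that is not an endpoint of either curve. -/
def crossingPairs (D : Set Curve) : Set (Sym2 Curve) :=
  {pr | ∃ c ∈ D, ∃ d ∈ D, c ≠ d ∧
    (∃ x, x ∈ c.1 ∧ x ∈ d.1 ∧ x ∉ c.2 ∧ x ∉ d.2) ∧ pr = s(c, d)}

/-- Hill's number `H(n)` as a rational number. -/
def Hfun (n : ℕ) : ℚ :=
  (1 / 4 : ℚ) * ((n / 2 : ℕ) : ℚ) * (((n - 1) / 2 : ℕ) : ℚ) *
    (((n - 2) / 2 : ℕ) : ℚ) * (((n - 3) / 2 : ℕ) : ℚ)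


namespace AP

lemma li2_coeff {a b : E3} (h : LinearIndependent ℝ ![a, b]) {s t : ℝ}
    (hst : s • a + t • b = 0) : s = 0 ∧ t = 0 := by
  rw [Fintype.linearIndependent_iff] at h
  have h2 := h ![s, t] (by simpa [Fin.sum_univ_two] using hst)
  exact ⟨h2 0, h2 1⟩

lemma li2_of_coeff {a b : E3} (h : ∀ s t : ℝ, s • a + t • b = 0 → s = 0 ∧ t = 0) :
    LinearIndependent ℝ ![a, b] := by
  rw [Fintype.linearIndependent_iff]
  intro g hg
  have h2 := h (g 0) (g 1) (by simpa [Fin.sum_univ_two] using hg)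
  intro i; fin_cases i
  · exact h2.1
  · exact h2.2

lemma li3_coeff {a b c : E3} (h : LinearIndependent ℝ ![a, b, c]) {s t u : ℝ}
    (hst : s • a + t • b + u • c = 0) : s = 0 ∧ t = 0 ∧ u = 0 := by
  rw [Fintype.linearIndependent_iff] at h
  have h2 := h ![s, t, u] (by simpa [Fin.sum_univ_three] using hst)
  exact ⟨h2 0, h2 1, h2 2⟩

lemma li2_of_li3 {a b c : E3} (h : LinearIndependent ℝ ![a, b, c]) :
    LinearIndependent ℝ ![a, b] := by
  refine li2_of_coeff fun s t hst => ?_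
  have h2 := li3_coeff h (s := s) (t := t) (u := 0) (by simpa using hst)
  exact ⟨h2.1, h2.2.1⟩

lemma coord_unique {a b : E3} (h : LinearIndependent ℝ ![a, b]) {s t s' t' : ℝ}
    (heq : s • a + t • b = s' • a + t' • b) : s = s' ∧ t = t' := by
  have h2 := li2_coeff h (s := s - s') (t := t - t')
    (by rw [sub_smul, sub_smul]; rw [← sub_eq_zero] at heq; linear_combination (norm := module) heq)
  constructor <;> linarith [h2.1, h2.2]

lemma eq_or_neg_of_smul {x y : E3} {c : ℝ} (h : y = c • x)
    (hx : ‖x‖ = 1) (hy : ‖y‖ = 1) : y = x ∨ y = -x := by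
  have hc : |c| = 1 := by
    have h2 := congrArg norm h
    rw [norm_smul, hx, Real.norm_eq_abs, mul_one, hy] at h2
    exact h2.symm
  rcases abs_eq (by norm_num : (0:ℝ) ≤ 1) |>.mp hc with h1 | h1
  · left; rw [h, h1, one_smul]
  · right; rw [h, h1, neg_smul, one_smul]

/-- Key uniqueness: two unit vectors lying in both `span{u₁,u₂}` and `span{w₁,w₂}`,
where `u₁` is not in the second span, are equal up to sign. -/
lemma unique_pm {u₁ u₂ w₁ w₂ x y : E3} {a b a' b' c d c' d' : ℝ}
    (hx : x = a • u₁ + b • u₂) (hy : y = a' • u₁ + b' • u₂)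
    (hxw : x = c • w₁ + d • w₂) (hyw : y = c' • w₁ + d' • w₂)
    (hu : ¬ ∃ γ δ : ℝ, u₁ = γ • w₁ + δ • w₂)
    (hnx : ‖x‖ = 1) (hny : ‖y‖ = 1) : y = x ∨ y = -x := by
  by_cases hdet : a * b' - a' * b = 0
  · -- proportional case
    have hax : a' • x = a • y := by
      have h1 : a' • x - a • y = (a' * b - a * b') • u₂ := by rw [hx, hy]; module
      have h0 : a' * b - a * b' = 0 := by linarith
      rw [h0, zero_smul, sub_eq_zero] at h1; exact h1
    have hbx : b' • x = b • y := by
      have h1 : b' • x - b • y = (a * b' - a' * b) • u₁ := by rw [hx, hy]; module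
      rw [hdet, zero_smul, sub_eq_zero] at h1; exact h1
    have hx0 : x ≠ 0 := fun h0 => by simp [h0] at hnx
    by_cases ha : a = 0
    · have ha' : a' = 0 := by
        rcases smul_eq_zero.mp (by rw [hax, ha, zero_smul]) with h0 | h0
        · exact h0
        · exact absurd h0 hx0
      have hb : b ≠ 0 := by
        intro h0
        exact hx0 (by rw [hx, ha, h0, zero_smul, zero_smul, add_zero])
      refine eq_or_neg_of_smul (c := b⁻¹ * b') ?_ hnx hny
      rw [mul_smul, hbx, smul_smul, inv_mul_cancel₀ hb, one_smul]
    · refine eq_or_neg_of_smul (c := a⁻¹ * a') ?_ hnx hny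
      rw [mul_smul, hax, smul_smul, inv_mul_cancel₀ ha, one_smul]
  · -- u₁ would be in span{w₁,w₂}
    exfalso
    apply hu
    have h1 : (a * b' - a' * b) • u₁ = b' • x - b • y := by
      rw [hx, hy]; module
    refine ⟨(a * b' - a' * b)⁻¹ * (b' * c - b * c'), (a * b' - a' * b)⁻¹ * (b' * d - b * d'), ?_⟩
    have h2 : u₁ = (a * b' - a' * b)⁻¹ • ((a * b' - a' * b) • u₁) := by
      rw [smul_smul, inv_mul_cancel₀ hdet, one_smul]
    rw [h2, h1, hxw, hyw]
    module

end AP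
namespace AP

/-- Cone characterization of the geodesic arc. -/
lemma mem_arc_iff {a b : E3} (hli : LinearIndependent ℝ ![a, b]) (x : E3) :
    x ∈ arc a b ↔ ‖x‖ = 1 ∧ ∃ s t : ℝ, 0 ≤ s ∧ 0 ≤ t ∧ x = s • a + t • b := by
  constructor
  · rintro ⟨t, ⟨ht0, ht1⟩, hx⟩
    set u : E3 := (1 - t) • a + t • b with hu
    have hu0 : u ≠ 0 := by
      intro h0
      have h2 := li2_coeff hli h0
      linarith [h2.2]
    have hnu : ‖u‖ ≠ 0 := norm_ne_zero_iff.mpr hu0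
    refine ⟨?_, ‖u‖⁻¹ * (1 - t), ‖u‖⁻¹ * t, ?_, ?_, ?_⟩
    · rw [hx, norm_smul, norm_inv, norm_norm, inv_mul_cancel₀ hnu]
    · exact mul_nonneg (by positivity) (by linarith)
    · exact mul_nonneg (by positivity) (by linarith)
    · rw [hx, hu, smul_add, smul_smul, smul_smul]
  · rintro ⟨hnx, s, t, hs, ht, hx⟩
    have hst : 0 < s + t := by
      rcases lt_or_eq_of_le (by linarith : (0:ℝ) ≤ s + t) with h | h
      · exact h
      · exfalso
        have hs0 : s = 0 := by linarith
        have ht0 : t = 0 := by linarith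
        rw [hx, hs0, ht0, zero_smul, zero_smul, add_zero] at hnx
        simp at hnx
    refine ⟨t / (s + t), ⟨div_nonneg ht (le_of_lt hst), by rw [div_le_one hst]; linarith⟩, ?_⟩
    have h1 : (1 - t / (s + t)) = s / (s + t) := by field_simp; ring
    have h2 : (1 - t / (s + t)) • a + (t / (s + t)) • b = (s + t)⁻¹ • x := by
      rw [h1, hx, smul_add, smul_smul, smul_smul, div_eq_inv_mul, div_eq_inv_mul]
    rw [h2, norm_smul, hnx, mul_one, norm_inv, Real.norm_eq_abs,
      abs_of_pos hst, inv_inv, smul_smul, mul_inv_cancel₀ (ne_of_gt hst), one_smul]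

/-- Interior (non-endpoint) characterization of the arc. -/
lemma mem_arc_int_iff {a b : E3} (hna : ‖a‖ = 1) (hnb : ‖b‖ = 1)
    (hli : LinearIndependent ℝ ![a, b]) (x : E3) :
    (x ∈ arc a b ∧ x ≠ a ∧ x ≠ b) ↔
      ‖x‖ = 1 ∧ ∃ s t : ℝ, 0 < s ∧ 0 < t ∧ x = s • a + t • b := by
  constructor
  · rintro ⟨hmem, hxa, hxb⟩
    rcases (mem_arc_iff hli x).mp hmem with ⟨hnx, s, t, hs, ht, hx⟩
    refine ⟨hnx, s, t, ?_, ?_, hx⟩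
    · rcases lt_or_eq_of_le hs with h | h
      · exact h
      · exfalso
        rw [← h, zero_smul, zero_add] at hx
        have : |t| = 1 := by
          have h2 := congrArg norm hx
          rw [norm_smul, hnb, Real.norm_eq_abs, mul_one, hnx] at h2
          exact h2.symm
        have ht1 : t = 1 := by rcases abs_eq (by norm_num : (0:ℝ) ≤ 1) |>.mp this with h1 | h1 <;> linarith
        exact hxb (by rw [hx, ht1, one_smul])
    · rcases lt_or_eq_of_le ht with h | h
      · exact h
      · exfalso
        rw [← h, zero_smul, add_zero] at hx
        have : |s| = 1 := by
          have h2 := congrArg norm hx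
          rw [norm_smul, hna, Real.norm_eq_abs, mul_one, hnx] at h2
          exact h2.symm
        have hs1 : s = 1 := by rcases abs_eq (by norm_num : (0:ℝ) ≤ 1) |>.mp this with h1 | h1 <;> linarith
        exact hxa (by rw [hx, hs1, one_smul])
  · rintro ⟨hnx, s, t, hs, ht, hx⟩
    refine ⟨(mem_arc_iff hli x).mpr ⟨hnx, s, t, le_of_lt hs, le_of_lt ht, hx⟩, ?_, ?_⟩
    · intro h0
      rw [h0] at hx
      have h2 : (1 - s) • a + (-t) • b = 0 := by
        rw [← sub_eq_zero] at hx
        linear_combination (norm := module) hx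
      have h3 := li2_coeff hli h2
      linarith [h3.2]
    · intro h0
      rw [h0] at hx
      have h2 : (-s) • a + (1 - t) • b = 0 := by
        rw [← sub_eq_zero] at hx
        linear_combination (norm := module) hx
      have h3 := li2_coeff hli h2
      linarith [h3.1]

lemma norm_combo {p v : E3} (hp : ‖p‖ = 1) (hvn : ‖v‖ = 1) (ho : ⟪p, v⟫ = 0)
    (s t : ℝ) : ‖s • p + t • v‖ ^ 2 = s ^ 2 + t ^ 2 := by
  rw [norm_add_sq_real, norm_smul, norm_smul, real_inner_smul_left, real_inner_smul_right, ho,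
    Real.norm_eq_abs, Real.norm_eq_abs, hp, hvn]
  rw [mul_one, mul_one, sq_abs, sq_abs]
  ring

/-- Cone characterization of the half-circle. -/
lemma mem_halfCircle_iff {p v : E3} (hp : ‖p‖ = 1) (hvn : ‖v‖ = 1) (ho : ⟪p, v⟫ = 0) (x : E3) :
    x ∈ halfCircle p v ↔ ‖x‖ = 1 ∧ ∃ s t : ℝ, 0 ≤ t ∧ x = s • p + t • v := by
  constructor
  · rintro ⟨θ, ⟨hθ0, hθπ⟩, hx⟩
    have hn : ‖x‖ = 1 := by
      have h2 : ‖x‖ ^ 2 = 1 := by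
        rw [hx, norm_combo hp hvn ho]
        exact Real.cos_sq_add_sin_sq θ
      nlinarith [norm_nonneg x]
    exact ⟨hn, Real.cos θ, Real.sin θ, Real.sin_nonneg_of_nonneg_of_le_pi hθ0 hθπ, hx⟩
  · rintro ⟨hnx, s, t, ht, hx⟩
    have h2 : s ^ 2 + t ^ 2 = 1 := by
      have := norm_combo hp hvn ho s t
      rw [← hx, hnx] at this
      linarith [this]
    have hs1 : -1 ≤ s ∧ s ≤ 1 := by constructor <;> nlinarith
    refine ⟨Real.arccos s, ⟨Real.arccos_nonneg s, Real.arccos_le_pi s⟩, ?_⟩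
    rw [Real.cos_arccos hs1.1 hs1.2, Real.sin_arccos]
    have h3 : Real.sqrt (1 - s ^ 2) = t := by
      rw [show (1 : ℝ) - s ^ 2 = t ^ 2 by linarith, Real.sqrt_sq ht]
    rw [h3, hx]

lemma li_pv {p v : E3} (hp : ‖p‖ = 1) (hvn : ‖v‖ = 1) (ho : ⟪p, v⟫ = 0) :
    LinearIndependent ℝ ![p, v] := by
  have ho' : ⟪v, p⟫ = 0 := by rw [real_inner_comm]; exact ho
  refine li2_of_coeff fun s t hst => ?_
  have h1 : ⟪p, s • p + t • v⟫ = s := by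
    rw [inner_add_right, real_inner_smul_right, real_inner_smul_right, ho,
      real_inner_self_eq_norm_sq, hp]
    ring
  have h2 : ⟪v, s • p + t • v⟫ = t := by
    rw [inner_add_right, real_inner_smul_right, real_inner_smul_right, ho',
      real_inner_self_eq_norm_sq, hvn]
    ring
  rw [hst, inner_zero_right] at h1 h2
  exact ⟨h1.symm, h2.symm⟩

/-- Interior characterization of the half-circle. -/
lemma mem_halfCircle_int_iff {p v : E3} (hp : ‖p‖ = 1) (hvn : ‖v‖ = 1) (ho : ⟪p, v⟫ = 0) (x : E3) :
    (x ∈ halfCircle p v ∧ x ≠ p ∧ x ≠ -p) ↔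
      ‖x‖ = 1 ∧ ∃ s t : ℝ, 0 < t ∧ x = s • p + t • v := by
  have hli : LinearIndependent ℝ ![p, v] := li_pv hp hvn ho
  constructor
  · rintro ⟨hmem, hxp, hxnp⟩
    rcases (mem_halfCircle_iff hp hvn ho x).mp hmem with ⟨hnx, s, t, ht, hx⟩
    refine ⟨hnx, s, t, ?_, hx⟩
    rcases lt_or_eq_of_le ht with h | h
    · exact h
    · exfalso
      rw [← h, zero_smul, add_zero] at hx
      have : |s| = 1 := by
        have h2 := congrArg norm hx
        rw [norm_smul, hp, Real.norm_eq_abs, mul_one, hnx] at h2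
        exact h2.symm
      rcases abs_eq (by norm_num : (0:ℝ) ≤ 1) |>.mp this with h1 | h1
      · exact hxp (by rw [hx, h1, one_smul])
      · exact hxnp (by rw [hx, h1, neg_smul, one_smul])
  · rintro ⟨hnx, s, t, ht, hx⟩
    refine ⟨(mem_halfCircle_iff hp hvn ho x).mpr ⟨hnx, s, t, le_of_lt ht, hx⟩, ?_, ?_⟩
    · intro h0
      rw [h0] at hx
      have h2 : (1 - s) • p + (-t) • v = 0 := by
        rw [← sub_eq_zero] at hx
        linear_combination (norm := module) hx
      have h3 := li2_coeff hli h2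
      linarith [h3.2]
    · intro h0
      rw [h0] at hx
      have h2 : (-1 - s) • p + (-t) • v = 0 := by
        rw [← sub_eq_zero] at hx
        linear_combination (norm := module) hx
      have h3 := li2_coeff hli h2
      linarith [h3.2]


end AP
namespace AP

lemma li2_swap {a b : E3} (h : LinearIndependent ℝ ![a, b]) :
    LinearIndependent ℝ ![b, a] := by
  refine li2_of_coeff fun s t hst => ?_
  have h2 := li2_coeff h (s := t) (t := s) (by rw [← hst]; module)
  exact ⟨h2.2, h2.1⟩

lemma li2_smul {a b : E3} (h : LinearIndependent ℝ ![a, b]) {ε δ : ℝ}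
    (hε : ε ≠ 0) (hδ : δ ≠ 0) : LinearIndependent ℝ ![ε • a, δ • b] := by
  refine li2_of_coeff fun s t hst => ?_
  have h2 := li2_coeff h (s := s * ε) (t := t * δ)
    (by rw [← hst]; module)
  constructor
  · rcases mul_eq_zero.mp h2.1 with h' | h'
    · exact h'
    · exact absurd h' hε
  · rcases mul_eq_zero.mp h2.2 with h' | h'
    · exact h'
    · exact absurd h' hδ

lemma finrank_span_pair {a b : E3} (h : LinearIndependent ℝ ![a, b]) :
    Module.finrank ℝ (Submodule.span ℝ ({a, b} : Set E3)) = 2 := by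
  have hr : ({a, b} : Set E3) = Set.range ![a, b] := by
    simp [Matrix.range_cons, Matrix.range_empty, Set.pair_comm]
  rw [hr, finrank_span_eq_card h]
  simp

/-- Two 2-dimensional subspaces of `ℝ³` contain a common unit vector. -/
lemma exists_unit_inter {a b c d : E3} (hab : LinearIndependent ℝ ![a, b])
    (hcd : LinearIndependent ℝ ![c, d]) :
    ∃ x : E3, ‖x‖ = 1 ∧ (∃ s t : ℝ, x = s • a + t • b) ∧ (∃ s t : ℝ, x = s • c + t • d) := by
  set U := Submodule.span ℝ ({a, b} : Set E3) with hU
  set V := Submodule.span ℝ ({c, d} : Set E3) with hV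
  have hUr : Module.finrank ℝ U = 2 := finrank_span_pair hab
  have hVr : Module.finrank ℝ V = 2 := finrank_span_pair hcd
  have hsup : Module.finrank ℝ (U ⊔ V : Submodule ℝ E3) ≤ 3 := by
    have h1 := Submodule.finrank_le (U ⊔ V : Submodule ℝ E3)
    rw [show Module.finrank ℝ E3 = 3 from finrank_euclideanSpace_fin] at h1
    exact h1
  have hid := Submodule.finrank_sup_add_finrank_inf_eq U V
  have hinf : 1 ≤ Module.finrank ℝ (U ⊓ V : Submodule ℝ E3) := by omega
  have hne : (U ⊓ V : Submodule ℝ E3) ≠ ⊥ := by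
    intro h0
    rw [h0, finrank_bot] at hinf
    omega
  obtain ⟨x, hx, hx0⟩ := (Submodule.ne_bot_iff _).mp hne
  have hnx : ‖x‖ ≠ 0 := norm_ne_zero_iff.mpr hx0
  refine ⟨‖x‖⁻¹ • x, ?_, ?_, ?_⟩
  · rw [norm_smul, norm_inv, norm_norm, inv_mul_cancel₀ hnx]
  · have hm : ‖x‖⁻¹ • x ∈ U := U.smul_mem _ (Submodule.mem_inf.mp hx).1
    obtain ⟨s, t, hst⟩ := Submodule.mem_span_pair.mp hm
    exact ⟨s, t, hst.symm⟩
  · have hm : ‖x‖⁻¹ • x ∈ V := V.smul_mem _ (Submodule.mem_inf.mp hx).2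
    obtain ⟨s, t, hst⟩ := Submodule.mem_span_pair.mp hm
    exact ⟨s, t, hst.symm⟩

end AP
namespace AP

/-- Bundled hypotheses of the main theorem. -/
structure Good (k : ℕ) (P : Set E3) (v : E3 → E3) : Prop where
  hk : 3 ≤ k
  hPS : P ⊆ unitSphere
  hfin : P.Finite
  hcard : P.ncard = k
  hgen : GenPos P
  hv : ∀ p ∈ P, ‖v p‖ = 1 ∧ ⟪p, v p⟫ = 0
  hdisj : ∀ p ∈ P, ∀ q ∈ P, p ≠ q → halfCircle p (v p) ∩ halfCircle q (v q) = ∅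
  hgc : ∀ p ∈ P, ((Submodule.span ℝ {p, v p} : Set E3) ∩ unitSphere) ∩ phat P =
      ({p, -p} : Set E3)

variable {k : ℕ} {P : Set E3} {v : E3 → E3}

lemma Good.norm_mem (H : Good k P v) {p : E3} (hp : p ∈ P) : ‖p‖ = 1 := H.hPS hp

lemma Good.third (H : Good k P v) (p q : E3) : ∃ r ∈ P, r ≠ p ∧ r ≠ q := by
  have hne : (P \ {p, q}).Nonempty := by
    rw [Set.nonempty_iff_ne_empty]
    intro h0
    have hsub : P ⊆ {p, q} := by
      intro x hx
      by_contra hmem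
      exact absurd (Set.mem_diff_of_mem hx hmem) (by rw [h0]; exact Set.notMem_empty x)
    have h1 : P.ncard ≤ ({p, q} : Set E3).ncard :=
      Set.ncard_le_ncard hsub (Set.toFinite _)
    have h2 : ({p, q} : Set E3).ncard ≤ 2 := by
      apply le_trans (Set.ncard_insert_le p {q})
      simp
    rw [H.hcard] at h1
    have h3 := H.hk
    omega
  obtain ⟨r, hr⟩ := hne
  refine ⟨r, hr.1, ?_⟩
  have h5 := hr.2
  simp only [Set.mem_insert_iff, Set.mem_singleton_iff] at h5
  push_neg at h5
  exact h5

lemma Good.neg_notmem (H : Good k P v) {p : E3} (hp : p ∈ P) : -p ∉ P := by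
  intro hnp
  have hpn : p ≠ -p := by
    intro h0
    have h1 : p = 0 := by
      have h2 : (2 : ℝ) • p = 0 := by
        rw [two_smul]
        nth_rewrite 2 [h0]
        simp
      rcases smul_eq_zero.mp h2 with h' | h'
      · norm_num at h'
      · exact h' 
    rw [h1] at hp
    have := H.norm_mem hp
    simp at this
  obtain ⟨r, hr, hrp, hrnp⟩ := H.third p (-p)
  have hli := H.hgen p hp (-p) hnp r hr hpn (Ne.symm hrp) (Ne.symm hrnp)
  have h2 := li3_coeff hli (s := 1) (t := 1) (u := 0) (by module)
  exact one_ne_zero h2.1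

lemma Good.pnz (H : Good k P v) {p : E3} (hp : p ∈ P) : p ≠ 0 := by
  intro h0
  have := H.norm_mem hp
  rw [h0] at this
  simp at this

lemma Good.li2P (H : Good k P v) {p q : E3} (hp : p ∈ P) (hq : q ∈ P) (hne : p ≠ q) :
    LinearIndependent ℝ ![p, q] := by
  obtain ⟨r, hr, hrp, hrq⟩ := H.third p q
  exact li2_of_li3 (H.hgen p hp q hq r hr hne (Ne.symm hrp) (Ne.symm hrq))

lemma Good.coeff3 (H : Good k P v) {p q r : E3} (hp : p ∈ P) (hq : q ∈ P) (hr : r ∈ P)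
    (hpq : p ≠ q) (hpr : p ≠ r) (hqr : q ≠ r) {α β γ : ℝ}
    (h : α • p + β • q + γ • r = 0) : α = 0 ∧ β = 0 ∧ γ = 0 :=
  li3_coeff (H.hgen p hp q hq r hr hpq hpr hqr) h

lemma Good.not_in_span (H : Good k P v) {p r s : E3} (hp : p ∈ P) (hr : r ∈ P) (hs : s ∈ P)
    (hpr : p ≠ r) (hps : p ≠ s) (hrs : r ≠ s) : ¬∃ γ δ : ℝ, p = γ • r + δ • s := by
  rintro ⟨γ, δ, h⟩
  have h2 := H.coeff3 hp hr hs hpr hps hrs (α := 1) (β := -γ) (γ := -δ)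
    (by rw [h]; module)
  exact one_ne_zero h2.1

lemma mem_phat_iff {x : E3} : x ∈ phat P ↔ ∃ p ∈ P, x = p ∨ x = -p := by
  constructor
  · rintro (hx | ⟨p, hp, rfl⟩)
    · exact ⟨x, hx, Or.inl rfl⟩
    · exact ⟨p, hp, Or.inr rfl⟩
  · rintro ⟨p, hp, rfl | rfl⟩
    · exact Or.inl hp
    · exact Or.inr ⟨p, hp, rfl⟩

lemma smul_mem_phat {p : E3} (hp : p ∈ P) {ε : ℝ} (hε : ε = 1 ∨ ε = -1) :
    ε • p ∈ phat P := by
  rcases hε with rfl | rfl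
  · rw [one_smul]; exact Or.inl hp
  · refine Or.inr ⟨p, hp, ?_⟩
    simp

lemma phat_rep {x : E3} (hx : x ∈ phat P) :
    ∃ ε p, (ε = (1:ℝ) ∨ ε = -1) ∧ p ∈ P ∧ x = ε • p := by
  rcases mem_phat_iff.mp hx with ⟨p, hp, h | h⟩
  · exact ⟨1, p, Or.inl rfl, hp, by rw [h, one_smul]⟩
  · exact ⟨-1, p, Or.inr rfl, hp, by rw [h]; simp⟩

lemma sgn_ne_zero {ε : ℝ} (hε : ε = 1 ∨ ε = -1) : ε ≠ 0 := by
  rcases hε with rfl | rfl <;> norm_num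

lemma Good.rep_unique (H : Good k P v) {p q : E3} (hp : p ∈ P) (hq : q ∈ P)
    {ε δ : ℝ} (hε : ε = 1 ∨ ε = -1) (hδ : δ = 1 ∨ δ = -1)
    (h : ε • p = δ • q) : p = q ∧ ε = δ := by
  rcases hε with rfl | rfl <;> rcases hδ with rfl | rfl
  · rw [one_smul, one_smul] at h; exact ⟨h, rfl⟩
  · rw [one_smul] at h
    exfalso
    refine H.neg_notmem hq ?_
    rw [show -q = (-1 : ℝ) • q by simp, ← h]
    exact hp
  · rw [one_smul] at h
    exfalso
    refine H.neg_notmem hp ?_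
    rw [show -p = (-1 : ℝ) • p by simp, h]
    exact hq
  · have h2 : p = q := by
      have := congrArg (fun y : E3 => (-1 : ℝ) • y) h
      simpa [smul_smul] using this
    exact ⟨h2, rfl⟩

lemma sgn_norm {ε : ℝ} (hε : ε = 1 ∨ ε = -1) (p : E3) : ‖ε • p‖ = ‖p‖ := by
  rcases hε with rfl | rfl <;> simp

end AP
namespace AP

def arcC (a b : E3) : Curve := (arc a b, {a, b})

def hcC (p w : E3) : Curve := (halfCircle p w, {p, -p})

def inCone (a b x : E3) : Prop := ∃ s t : ℝ, 0 < s ∧ 0 < t ∧ x = s • a + t • b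

lemma inCone_swap {a b x : E3} (h : inCone a b x) : inCone b a x := by
  obtain ⟨s, t, hs, ht, hx⟩ := h
  exact ⟨t, s, ht, hs, by rw [hx]; module⟩

lemma int_arc_iff {a b : E3} (hna : ‖a‖ = 1) (hnb : ‖b‖ = 1)
    (hli : LinearIndependent ℝ ![a, b]) (x : E3) :
    (x ∈ arc a b ∧ x ∉ ({a, b} : Set E3)) ↔ ‖x‖ = 1 ∧ inCone a b x := by
  have h1 : x ∉ ({a, b} : Set E3) ↔ x ≠ a ∧ x ≠ b := by
    simp only [Set.mem_insert_iff, Set.mem_singleton_iff]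
    push_neg
    rfl
  rw [h1, show (x ∈ arc a b ∧ x ≠ a ∧ x ≠ b) ↔ _ from mem_arc_int_iff hna hnb hli x]
  rfl

lemma int_hc_iff {p w : E3} (hp : ‖p‖ = 1) (hw : ‖w‖ = 1) (ho : ⟪p, w⟫ = 0) (x : E3) :
    (x ∈ halfCircle p w ∧ x ∉ ({p, -p} : Set E3)) ↔
      ‖x‖ = 1 ∧ ∃ s t : ℝ, 0 < t ∧ x = s • p + t • w := by
  have h1 : x ∉ ({p, -p} : Set E3) ↔ x ≠ p ∧ x ≠ -p := by
    simp only [Set.mem_insert_iff, Set.mem_singleton_iff]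
    push_neg
    rfl
  rw [h1, show (x ∈ halfCircle p w ∧ x ≠ p ∧ x ≠ -p) ↔ _ from mem_halfCircle_int_iff hp hw ho x]

lemma arc_comm {a b : E3} (hli : LinearIndependent ℝ ![a, b]) : arc a b = arc b a := by
  ext x
  rw [mem_arc_iff hli, mem_arc_iff (li2_swap hli)]
  constructor <;> rintro ⟨hn, s, t, hs, ht, hx⟩ <;>
    exact ⟨hn, t, s, ht, hs, by rw [hx]; module⟩

lemma arcC_swap {a b : E3} (hli : LinearIndependent ℝ ![a, b]) : arcC a b = arcC b a := by
  unfold arcC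
  rw [arc_comm hli, Set.pair_comm]

variable {k : ℕ} {P : Set E3} {v : E3 → E3}

lemma Good.li2sm (H : Good k P v) {p q : E3} (hp : p ∈ P) (hq : q ∈ P) (hpq : p ≠ q)
    {ε δ : ℝ} (hε : ε = 1 ∨ ε = -1) (hδ : δ = 1 ∨ δ = -1) :
    LinearIndependent ℝ ![ε • p, δ • q] :=
  li2_smul (H.li2P hp hq hpq) (sgn_ne_zero hε) (sgn_ne_zero hδ)

lemma Good.arcC_mem (H : Good k P v) {p q : E3} (hp : p ∈ P) (hq : q ∈ P) (hpq : p ≠ q)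
    {ε δ : ℝ} (hε : ε = 1 ∨ ε = -1) (hδ : δ = 1 ∨ δ = -1) :
    arcC (ε • p) (δ • q) ∈ drawingCurves P v P := by
  left
  refine ⟨ε • p, δ • q, smul_mem_phat hp hε, smul_mem_phat hq hδ, ?_, ?_, rfl⟩
  · intro h
    exact hpq ((H.rep_unique hq hp hδ hε h).1.symm)
  · intro h
    have h2 : δ • q = (-ε) • p := by rw [h]; module
    have hne : -ε = 1 ∨ -ε = -1 := by rcases hε with rfl | rfl <;> norm_num
    exact hpq ((H.rep_unique hq hp hδ hne h2).1.symm)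

lemma Good.hcC_mem (H : Good k P v) {p : E3} (hp : p ∈ P) :
    hcC p (v p) ∈ drawingCurves P v P :=
  Or.inr ⟨p, hp, rfl⟩

lemma Good.curve_cases (H : Good k P v) {c : Curve} (hc : c ∈ drawingCurves P v P) :
    (∃ ε δ : ℝ, ∃ p q : E3, (ε = 1 ∨ ε = -1) ∧ (δ = 1 ∨ δ = -1) ∧ p ∈ P ∧ q ∈ P ∧ p ≠ q ∧
      c = arcC (ε • p) (δ • q)) ∨ (∃ p ∈ P, c = hcC p (v p)) := by
  rcases hc with ⟨a, b, ha, hb, hba, hbna, rfl⟩ | h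
  · left
    obtain ⟨ε, p, hε, hp, rfl⟩ := phat_rep ha
    obtain ⟨δ, q, hδ, hq, rfl⟩ := phat_rep hb
    refine ⟨ε, δ, p, q, hε, hδ, hp, hq, ?_, rfl⟩
    intro h0
    subst h0
    rcases hε with rfl | rfl <;> rcases hδ with rfl | rfl
    · exact hba rfl
    · exact hbna (by module)
    · exact hbna (by module)
    · exact hba rfl
  · right
    exact h

lemma Good.pairset_eq (H : Good k P v) {ε δ ε' δ' : ℝ} {p q p' q' : E3}
    (hp : p ∈ P) (hq : q ∈ P) (hp' : p' ∈ P) (hq' : q' ∈ P)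
    (hε : ε = 1 ∨ ε = -1) (hδ : δ = 1 ∨ δ = -1) (hε' : ε' = 1 ∨ ε' = -1)
    (hδ' : δ' = 1 ∨ δ' = -1)
    (h : ({ε • p, δ • q} : Set E3) = {ε' • p', δ' • q'}) :
    (p = p' ∧ ε = ε' ∧ q = q' ∧ δ = δ') ∨ (p = q' ∧ ε = δ' ∧ q = p' ∧ δ = ε') := by
  rcases Set.pair_eq_pair_iff.mp h with ⟨h1, h2⟩ | ⟨h1, h2⟩
  · obtain ⟨e1, e2⟩ := H.rep_unique hp hp' hε hε' h1
    obtain ⟨f1, f2⟩ := H.rep_unique hq hq' hδ hδ' h2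
    exact Or.inl ⟨e1, e2, f1, f2⟩
  · obtain ⟨e1, e2⟩ := H.rep_unique hp hq' hε hδ' h1
    obtain ⟨f1, f2⟩ := H.rep_unique hq hp' hδ hε' h2
    exact Or.inr ⟨e1, e2, f1, f2⟩

lemma sign_forced {s₁ s₂ ε₁ ε₂ : ℝ} (hs₁ : 0 < s₁) (hs₂ : 0 < s₂)
    (hε₁ : ε₁ = 1 ∨ ε₁ = -1) (hε₂ : ε₂ = 1 ∨ ε₂ = -1)
    (h : s₁ * ε₁ = s₂ * ε₂) : ε₁ = ε₂ := by
  rcases hε₁ with rfl | rfl <;> rcases hε₂ with rfl | rfl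
  · rfl
  · exfalso; nlinarith
  · exfalso; nlinarith
  · rfl

lemma mulsgn_ne {t δ : ℝ} (ht : 0 < t) (hδ : δ = 1 ∨ δ = -1) : t * δ ≠ 0 := by
  rcases hδ with rfl | rfl <;> nlinarith

/-- On the same great circle, only one arc passes through a given interior point. -/
lemma Good.cone_same (H : Good k P v) {p q : E3} (hp : p ∈ P) (hq : q ∈ P) (hpq : p ≠ q)
    {ε₁ δ₁ ε₂ δ₂ : ℝ} (hε₁ : ε₁ = 1 ∨ ε₁ = -1) (hδ₁ : δ₁ = 1 ∨ δ₁ = -1)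
    (hε₂ : ε₂ = 1 ∨ ε₂ = -1) (hδ₂ : δ₂ = 1 ∨ δ₂ = -1) {x : E3}
    (h1 : inCone (ε₁ • p) (δ₁ • q) x) (h2 : inCone (ε₂ • p) (δ₂ • q) x) :
    ε₁ = ε₂ ∧ δ₁ = δ₂ := by
  obtain ⟨s₁, t₁, hs₁, ht₁, hx₁⟩ := h1
  obtain ⟨s₂, t₂, hs₂, ht₂, hx₂⟩ := h2
  have he : (s₁ * ε₁) • p + (t₁ * δ₁) • q = (s₂ * ε₂) • p + (t₂ * δ₂) • q := by
    rw [mul_smul, mul_smul, mul_smul, mul_smul, ← hx₁, ← hx₂]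
  obtain ⟨ha, hb⟩ := coord_unique (H.li2P hp hq hpq) he
  exact ⟨sign_forced hs₁ hs₂ hε₁ hε₂ ha, sign_forced ht₁ ht₂ hδ₁ hδ₂ hb⟩

/-- Arcs over class pairs sharing exactly one class do not cross. -/
lemma Good.cone_adj (H : Good k P v) {p q r : E3} (hp : p ∈ P) (hq : q ∈ P) (hr : r ∈ P)
    (hpq : p ≠ q) (hpr : p ≠ r) (hqr : q ≠ r)
    {ε₁ δ₁ ε₂ δ₂ : ℝ} (hδ₁ : δ₁ = 1 ∨ δ₁ = -1) {x : E3}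
    (h1 : inCone (ε₁ • p) (δ₁ • q) x) (h2 : inCone (ε₂ • p) (δ₂ • r) x) : False := by
  obtain ⟨s₁, t₁, hs₁, ht₁, hx₁⟩ := h1
  obtain ⟨s₂, t₂, hs₂, ht₂, hx₂⟩ := h2
  have he : (s₁ * ε₁ - s₂ * ε₂) • p + (t₁ * δ₁) • q + (-(t₂ * δ₂)) • r = 0 := by
    have h3 : s₁ • (ε₁ • p) + t₁ • (δ₁ • q) = s₂ • (ε₂ • p) + t₂ • (δ₂ • r) := by
      rw [← hx₁, ← hx₂]
    linear_combination (norm := module) h3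
  have h4 := H.coeff3 hp hq hr hpq hpr hqr he
  exact mulsgn_ne ht₁ hδ₁ h4.2.1

/-- A point of `P` distinct from `p` is not in the plane of the half-circle `H_p`. -/
lemma Good.span_pv (H : Good k P v) {p s : E3} (hp : p ∈ P) (hs : s ∈ P) (hps : s ≠ p) :
    ¬∃ γ₁ γ₂ : ℝ, s = γ₁ • p + γ₂ • (v p) := by
  rintro ⟨γ₁, γ₂, hrep⟩
  have hmem : s ∈ Submodule.span ℝ ({p, v p} : Set E3) :=
    Submodule.mem_span_pair.mpr ⟨γ₁, γ₂, hrep.symm⟩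
  have h8 : s ∈ ((Submodule.span ℝ {p, v p} : Set E3) ∩ unitSphere) ∩ phat P :=
    ⟨⟨hmem, H.norm_mem hs⟩, Or.inl hs⟩
  rw [H.hgc p hp] at h8
  rcases h8 with h8 | h8
  · exact hps h8
  · rw [Set.mem_singleton_iff] at h8
    refine H.neg_notmem hp ?_
    rw [← h8]
    exact hs

/-- The half-circle of `p` does not cross arcs over a class pair containing `p`. -/
lemma Good.hc_arc_shared (H : Good k P v) {p s : E3} (hp : p ∈ P) (hs : s ∈ P) (hps : p ≠ s)
    {ε δ α β : ℝ} (hδ : δ = 1 ∨ δ = -1) {x : E3}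
    (hβ : 0 < β) (hx : x = α • p + β • (v p))
    (h2 : inCone (ε • p) (δ • s) x) : False := by
  obtain ⟨c, d, hc, hd, hx2⟩ := h2
  have hB : (d * δ) ≠ 0 := mulsgn_ne hd hδ
  have heq : α • p + β • (v p) = (c * ε) • p + (d * δ) • s := by
    rw [mul_smul, mul_smul, ← hx, ← hx2]
  have h5 : (d * δ) • s = (α - c * ε) • p + β • (v p) := by
    linear_combination (norm := module) -heq
  refine H.span_pv hp hs (Ne.symm hps) ⟨(d * δ)⁻¹ * (α - c * ε), (d * δ)⁻¹ * β, ?_⟩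
  have h7 : s = (d * δ)⁻¹ • ((d * δ) • s) := by
    rw [smul_smul, inv_mul_cancel₀ hB, one_smul]
  rw [h7, h5, smul_add, smul_smul, smul_smul]

/-- A coefficient vanishing would put a vertex class on the other great circle. -/
lemma Good.coeff_ne (H : Good k P v) {p q r s x : E3} {a b : ℝ}
    (hp : p ∈ P) (hq : q ∈ P) (hr : r ∈ P) (hs : s ∈ P)
    (hqr : q ≠ r) (hqs : q ≠ s) (hpr : p ≠ r) (hps : p ≠ s) (hrs : r ≠ s)
    (hx : x = a • p + b • q) (hx2 : ∃ c d : ℝ, x = c • r + d • s) (hx0 : x ≠ 0) :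
    a ≠ 0 ∧ b ≠ 0 := by
  obtain ⟨c, d, hcd⟩ := hx2
  constructor
  · intro h0
    rw [h0, zero_smul, zero_add] at hx
    have hb : b ≠ 0 := by
      intro h1
      rw [h1, zero_smul] at hx
      exact hx0 hx
    refine H.not_in_span hq hr hs hqr hqs hrs ⟨b⁻¹ * c, b⁻¹ * d, ?_⟩
    have h7 : q = b⁻¹ • x := by rw [hx, smul_smul, inv_mul_cancel₀ hb, one_smul]
    rw [h7, hcd, smul_add, smul_smul, smul_smul]
  · intro h0
    rw [h0, zero_smul, add_zero] at hx
    have hb : a ≠ 0 := by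
      intro h1
      rw [h1, zero_smul] at hx
      exact hx0 hx
    refine H.not_in_span hp hr hs hpr hps hrs ⟨a⁻¹ * c, a⁻¹ * d, ?_⟩
    have h7 : p = a⁻¹ • x := by rw [hx, smul_smul, inv_mul_cancel₀ hb, one_smul]
    rw [h7, hcd, smul_add, smul_smul, smul_smul]

/-- Two unit crossing points of the same pair of great circles agree up to sign. -/
lemma Good.unique_cross (H : Good k P v) {u₂ r s x y p : E3}
    (hp : p ∈ P) (hr : r ∈ P) (hs : s ∈ P) (hpr : p ≠ r) (hps : p ≠ s) (hrs : r ≠ s)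
    (hx1 : ∃ a b : ℝ, x = a • p + b • u₂) (hy1 : ∃ a b : ℝ, y = a • p + b • u₂)
    (hx2 : ∃ c d : ℝ, x = c • r + d • s) (hy2 : ∃ c d : ℝ, y = c • r + d • s)
    (hnx : ‖x‖ = 1) (hny : ‖y‖ = 1) : y = x ∨ y = -x := by
  obtain ⟨a, b, hx1⟩ := hx1
  obtain ⟨a', b', hy1⟩ := hy1
  obtain ⟨c, d, hx2⟩ := hx2
  obtain ⟨c', d', hy2⟩ := hy2
  exact unique_pm hx1 hy1 hx2 hy2 (H.not_in_span hp hr hs hpr hps hrs) hnx hny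

lemma cone_of_coeffs {p q x : E3} {A B : ℝ} (hA : A ≠ 0) (hB : B ≠ 0)
    (hx : x = A • p + B • q) :
    ∃ ε δ : ℝ, (ε = 1 ∨ ε = -1) ∧ (δ = 1 ∨ δ = -1) ∧ inCone (ε • p) (δ • q) x := by
  refine ⟨if 0 < A then 1 else -1, if 0 < B then 1 else -1, ?_, ?_, |A|, |B|,
    abs_pos.mpr hA, abs_pos.mpr hB, ?_⟩
  · split_ifs <;> simp
  · split_ifs <;> simp
  · have h1 : |A| • ((if 0 < A then (1:ℝ) else -1) • p) = A • p := by
      rw [smul_smul]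
      congr 1
      split_ifs with h
      · rw [abs_of_pos h]; ring
      · rw [abs_of_nonpos (le_of_not_gt h)]; ring
    have h2 : |B| • ((if 0 < B then (1:ℝ) else -1) • q) = B • q := by
      rw [smul_smul]
      congr 1
      split_ifs with h
      · rw [abs_of_pos h]; ring
      · rw [abs_of_nonpos (le_of_not_gt h)]; ring
    rw [h1, h2, hx]

end AP
namespace AP

variable {k : ℕ} {P : Set E3} {v : E3 → E3}

lemma unit_ne_zero {x : E3} (h : ‖x‖ = 1) : x ≠ 0 := by
  intro h0
  rw [h0] at h
  simp at h

lemma inCone_coeffs {ε δ : ℝ} {p q x : E3} (h : inCone (ε • p) (δ • q) x) :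
    ∃ a b : ℝ, x = a • p + b • q := by
  obtain ⟨s, t, _, _, hx⟩ := h
  exact ⟨s * ε, t * δ, by rw [mul_smul, mul_smul]; exact hx⟩

/-- The combinatorial description of an ordered arc-arc crossing. -/
def QA (p q r s : E3) (σ : Bool) (cd : Curve × Curve) : Prop :=
  ∃ ε₁ δ₁ ε₂ δ₂ : ℝ, ∃ x : E3, ∃ aa bb : ℝ,
    (ε₁ = 1 ∨ ε₁ = -1) ∧ (δ₁ = 1 ∨ δ₁ = -1) ∧ (ε₂ = 1 ∨ ε₂ = -1) ∧ (δ₂ = 1 ∨ δ₂ = -1) ∧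
    cd = (arcC (ε₁ • p) (δ₁ • q), arcC (ε₂ • r) (δ₂ • s)) ∧
    ‖x‖ = 1 ∧ inCone (ε₁ • p) (δ₁ • q) x ∧ inCone (ε₂ • r) (δ₂ • s) x ∧
    x = aa • p + bb • q ∧ (0 < aa ↔ σ = true)

/-- The combinatorial description of an ordered halfcircle-arc crossing. -/
def QB (v : E3 → E3) (p r s : E3) (cd : Curve × Curve) : Prop :=
  ∃ ε δ : ℝ, ∃ x : E3, ∃ α β : ℝ,
    (ε = 1 ∨ ε = -1) ∧ (δ = 1 ∨ δ = -1) ∧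
    cd = (hcC p (v p), arcC (ε • r) (δ • s)) ∧
    ‖x‖ = 1 ∧ 0 < β ∧ x = α • p + β • (v p) ∧ inCone (ε • r) (δ • s) x

lemma Good.QA_exists (H : Good k P v) {p q r s : E3}
    (hp : p ∈ P) (hq : q ∈ P) (hr : r ∈ P) (hs : s ∈ P)
    (hpq : p ≠ q) (hpr : p ≠ r) (hps : p ≠ s) (hqr : q ≠ r) (hqs : q ≠ s) (hrs : r ≠ s)
    (σ : Bool) : ∃ cd, QA p q r s σ cd := by
  obtain ⟨x₀, hnx, ⟨a, b, hab⟩, ⟨c, d, hcd⟩⟩ :=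
    exists_unit_inter (H.li2P hp hq hpq) (H.li2P hr hs hrs)
  have hx0 : x₀ ≠ 0 := unit_ne_zero hnx
  have hab' := H.coeff_ne hp hq hr hs hqr hqs hpr hps hrs hab ⟨c, d, hcd⟩ hx0
  have hcd' := H.coeff_ne hr hs hp hq (Ne.symm hps) (Ne.symm hqs) (Ne.symm hpr)
    (Ne.symm hqr) hpq hcd ⟨a, b, hab⟩ hx0
  by_cases hσ : 0 < a ↔ σ = true
  · obtain ⟨ε₁, δ₁, hε₁, hδ₁, hc1⟩ := cone_of_coeffs hab'.1 hab'.2 hab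
    obtain ⟨ε₂, δ₂, hε₂, hδ₂, hc2⟩ := cone_of_coeffs hcd'.1 hcd'.2 hcd
    exact ⟨_, ε₁, δ₁, ε₂, δ₂, x₀, a, b, hε₁, hδ₁, hε₂, hδ₂, rfl, hnx, hc1, hc2, hab, hσ⟩
  · have hab2 : -x₀ = (-a) • p + (-b) • q := by rw [hab]; module
    have hcd2 : -x₀ = (-c) • r + (-d) • s := by rw [hcd]; module
    obtain ⟨ε₁, δ₁, hε₁, hδ₁, hc1⟩ :=
      cone_of_coeffs (neg_ne_zero.mpr hab'.1) (neg_ne_zero.mpr hab'.2) hab2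
    obtain ⟨ε₂, δ₂, hε₂, hδ₂, hc2⟩ :=
      cone_of_coeffs (neg_ne_zero.mpr hcd'.1) (neg_ne_zero.mpr hcd'.2) hcd2
    refine ⟨_, ε₁, δ₁, ε₂, δ₂, -x₀, -a, -b, hε₁, hδ₁, hε₂, hδ₂, rfl,
      by rw [norm_neg]; exact hnx, hc1, hc2, hab2, ?_⟩
    rcases lt_or_gt_of_ne hab'.1 with ha | ha
    · cases σ
      · exfalso; exact hσ (by simp; linarith)
      · simp only [iff_true]; linarith
    · cases σ
      · simp only [Bool.false_eq_true, iff_false]; push_neg; linarith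
      · exfalso; exact hσ (by simp [ha])

lemma Good.QA_unique (H : Good k P v) {p q r s : E3}
    (hp : p ∈ P) (hq : q ∈ P) (hr : r ∈ P) (hs : s ∈ P)
    (hpq : p ≠ q) (hpr : p ≠ r) (hps : p ≠ s) (hqr : q ≠ r) (hqs : q ≠ s) (hrs : r ≠ s)
    {σ : Bool} {cd cd' : Curve × Curve}
    (h1 : QA p q r s σ cd) (h2 : QA p q r s σ cd') : cd = cd' := by
  obtain ⟨ε₁, δ₁, ε₂, δ₂, x, aa, bb, hε₁, hδ₁, hε₂, hδ₂, hcd, hnx, hc1, hc2, hxab, hσ⟩ := h1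
  obtain ⟨ε₁', δ₁', ε₂', δ₂', x', aa', bb', hε₁', hδ₁', hε₂', hδ₂', hcd', hnx', hc1', hc2',
    hxab', hσ'⟩ := h2
  have hxx : x' = x := by
    have h3 := H.unique_cross hp hr hs hpr hps hrs ⟨aa, bb, hxab⟩ ⟨aa', bb', hxab'⟩
      (inCone_coeffs hc2) (inCone_coeffs hc2') hnx hnx'
    rcases h3 with h3 | h3
    · exact h3
    · exfalso
      have h4 : x' = (-aa) • p + (-bb) • q := by rw [h3, hxab]; module
      obtain ⟨e1, e2⟩ := coord_unique (H.li2P hp hq hpq) (hxab'.symm.trans h4)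
      have haa : aa ≠ 0 :=
        (H.coeff_ne hp hq hr hs hqr hqs hpr hps hrs hxab (inCone_coeffs hc2)
          (unit_ne_zero hnx)).1
      rw [e1] at hσ'
      cases σ
      · simp only [Bool.false_eq_true, iff_false, not_lt] at hσ hσ'
        exact haa (le_antisymm hσ (by linarith))
      · have g1 := hσ.mpr rfl
        have g2 := hσ'.mpr rfl
        linarith
  rw [hxx] at hc1' hc2'
  obtain ⟨g1, g2⟩ := H.cone_same hp hq hpq hε₁ hδ₁ hε₁' hδ₁' hc1 hc1'
  obtain ⟨g3, g4⟩ := H.cone_same hr hs hrs hε₂ hδ₂ hε₂' hδ₂' hc2 hc2'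
  rw [hcd, hcd', g1, g2, g3, g4]

lemma Good.QB_exists (H : Good k P v) {p r s : E3}
    (hp : p ∈ P) (hr : r ∈ P) (hs : s ∈ P)
    (hpr : p ≠ r) (hps : p ≠ s) (hrs : r ≠ s) : ∃ cd, QB v p r s cd := by
  have hvp := H.hv p hp
  obtain ⟨x₀, hnx, ⟨α, β, hab⟩, ⟨c, d, hcd⟩⟩ :=
    exists_unit_inter (li_pv (H.norm_mem hp) hvp.1 hvp.2) (H.li2P hr hs hrs)
  have hx0 : x₀ ≠ 0 := unit_ne_zero hnx
  have hβ : β ≠ 0 := by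
    intro h0
    rw [h0, zero_smul, add_zero] at hab
    have hα : α ≠ 0 := by
      intro h1
      rw [h1, zero_smul] at hab
      exact hx0 hab
    refine H.not_in_span hp hr hs hpr hps hrs ⟨α⁻¹ * c, α⁻¹ * d, ?_⟩
    have h7 : p = α⁻¹ • x₀ := by rw [hab, smul_smul, inv_mul_cancel₀ hα, one_smul]
    rw [h7, hcd, smul_add, smul_smul, smul_smul]
  have hc' : c ≠ 0 ∧ d ≠ 0 := by
    constructor
    · intro h0
      rw [h0, zero_smul, zero_add] at hcd
      have hd : d ≠ 0 := by
        intro h1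
        rw [h1, zero_smul] at hcd
        exact hx0 hcd
      refine H.span_pv hp hs (Ne.symm hps) ⟨d⁻¹ * α, d⁻¹ * β, ?_⟩
      have h7 : s = d⁻¹ • x₀ := by rw [hcd, smul_smul, inv_mul_cancel₀ hd, one_smul]
      rw [h7, hab, smul_add, smul_smul, smul_smul]
    · intro h0
      rw [h0, zero_smul, add_zero] at hcd
      have hd : c ≠ 0 := by
        intro h1
        rw [h1, zero_smul] at hcd
        exact hx0 hcd
      refine H.span_pv hp hr (Ne.symm hpr) ⟨c⁻¹ * α, c⁻¹ * β, ?_⟩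
      have h7 : r = c⁻¹ • x₀ := by rw [hcd, smul_smul, inv_mul_cancel₀ hd, one_smul]
      rw [h7, hab, smul_add, smul_smul, smul_smul]
  by_cases hb : 0 < β
  · obtain ⟨ε, δ, hε, hδ, hcone⟩ := cone_of_coeffs hc'.1 hc'.2 hcd
    exact ⟨_, ε, δ, x₀, α, β, hε, hδ, rfl, hnx, hb, hab, hcone⟩
  · have hab2 : -x₀ = (-α) • p + (-β) • (v p) := by rw [hab]; module
    have hcd2 : -x₀ = (-c) • r + (-d) • s := by rw [hcd]; module
    obtain ⟨ε, δ, hε, hδ, hcone⟩ :=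
      cone_of_coeffs (neg_ne_zero.mpr hc'.1) (neg_ne_zero.mpr hc'.2) hcd2
    refine ⟨_, ε, δ, -x₀, -α, -β, hε, hδ, rfl, by rw [norm_neg]; exact hnx, ?_, hab2, hcone⟩
    rcases lt_or_gt_of_ne hβ with h | h
    · linarith
    · exact absurd h hb

lemma Good.QB_unique (H : Good k P v) {p r s : E3}
    (hp : p ∈ P) (hr : r ∈ P) (hs : s ∈ P)
    (hpr : p ≠ r) (hps : p ≠ s) (hrs : r ≠ s) {cd cd' : Curve × Curve}
    (h1 : QB v p r s cd) (h2 : QB v p r s cd') : cd = cd' := by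
  obtain ⟨ε, δ, x, α, β, hε, hδ, hcd, hnx, hβ, hab, hcone⟩ := h1
  obtain ⟨ε', δ', x', α', β', hε', hδ', hcd', hnx', hβ', hab', hcone'⟩ := h2
  have hvp := H.hv p hp
  have hxx : x' = x := by
    have h3 := H.unique_cross hp hr hs hpr hps hrs ⟨α, β, hab⟩ ⟨α', β', hab'⟩
      (inCone_coeffs hcone) (inCone_coeffs hcone') hnx hnx'
    rcases h3 with h3 | h3
    · exact h3
    · exfalso
      have h4 : x' = (-α) • p + (-β) • (v p) := by rw [h3, hab]; module
      obtain ⟨e1, e2⟩ :=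
        coord_unique (li_pv (H.norm_mem hp) hvp.1 hvp.2) (hab'.symm.trans h4)
      linarith [e2]
  rw [hxx] at hcone'
  obtain ⟨g1, g2⟩ := H.cone_same hr hs hrs hε hδ hε' hδ' hcone hcone'
  rw [hcd, hcd', g1, g2]

/-- The set of ordered crossings. -/
def OCs (P : Set E3) (v : E3 → E3) : Set (Curve × Curve) :=
  {cd | cd.1 ∈ drawingCurves P v P ∧ cd.2 ∈ drawingCurves P v P ∧ cd.1 ≠ cd.2 ∧
    ∃ x, x ∈ cd.1.1 ∧ x ∈ cd.2.1 ∧ x ∉ cd.1.2 ∧ x ∉ cd.2.2}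

def IsHC (P : Set E3) (v : E3 → E3) (c : Curve) : Prop := ∃ p ∈ P, c = hcC p (v p)

lemma Good.arc_ne_hc (H : Good k P v) {ε δ : ℝ} {p q t : E3}
    (hp : p ∈ P) (hq : q ∈ P) (ht : t ∈ P) (hpq : p ≠ q)
    (hε : ε = 1 ∨ ε = -1) (hδ : δ = 1 ∨ δ = -1) :
    arcC (ε • p) (δ • q) ≠ hcC t (v t) := by
  intro h
  have h2 : ({ε • p, δ • q} : Set E3) = {(1:ℝ) • t, (-1:ℝ) • t} := by
    have h3 := congrArg Prod.snd h
    simp only [arcC, hcC] at h3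
    rw [h3]
    norm_num
  rcases H.pairset_eq hp hq ht ht hε hδ (Or.inl rfl) (Or.inr rfl) h2 with
    ⟨e1, _, e3, _⟩ | ⟨e1, _, e3, _⟩ <;> exact hpq (e1.trans e3.symm)

lemma Good.arcC_ne (H : Good k P v) {ε₁ δ₁ ε₂ δ₂ : ℝ} {p q r s : E3}
    (hp : p ∈ P) (hq : q ∈ P) (hr : r ∈ P) (hs : s ∈ P)
    (hpr : p ≠ r) (hps : p ≠ s)
    (hε₁ : ε₁ = 1 ∨ ε₁ = -1) (hδ₁ : δ₁ = 1 ∨ δ₁ = -1)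
    (hε₂ : ε₂ = 1 ∨ ε₂ = -1) (hδ₂ : δ₂ = 1 ∨ δ₂ = -1) :
    arcC (ε₁ • p) (δ₁ • q) ≠ arcC (ε₂ • r) (δ₂ • s) := by
  intro h
  have h2 : ({ε₁ • p, δ₁ • q} : Set E3) = {ε₂ • r, δ₂ • s} := by
    have h3 := congrArg Prod.snd h
    simpa only [arcC] using h3
  rcases H.pairset_eq hp hq hr hs hε₁ hδ₁ hε₂ hδ₂ h2 with ⟨e1, _⟩ | ⟨e1, _⟩
  · exact hpr e1
  · exact hps e1

lemma Good.QA_cross (H : Good k P v) {p q r s : E3}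
    (hp : p ∈ P) (hq : q ∈ P) (hr : r ∈ P) (hs : s ∈ P)
    (hpq : p ≠ q) (hpr : p ≠ r) (hps : p ≠ s) (hqr : q ≠ r) (hqs : q ≠ s) (hrs : r ≠ s)
    {σ : Bool} {cd : Curve × Curve} (hQA : QA p q r s σ cd) :
    cd ∈ OCs P v ∧ ¬IsHC P v cd.1 ∧ ¬IsHC P v cd.2 := by
  obtain ⟨ε₁, δ₁, ε₂, δ₂, x, aa, bb, hε₁, hδ₁, hε₂, hδ₂, hcd, hnx, hc1, hc2, hxab, hσ⟩ := hQA
  have hint1 := (int_arc_iff (by rw [sgn_norm hε₁]; exact H.norm_mem hp)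
    (by rw [sgn_norm hδ₁]; exact H.norm_mem hq) (H.li2sm hp hq hpq hε₁ hδ₁) x).mpr ⟨hnx, hc1⟩
  have hint2 := (int_arc_iff (by rw [sgn_norm hε₂]; exact H.norm_mem hr)
    (by rw [sgn_norm hδ₂]; exact H.norm_mem hs) (H.li2sm hr hs hrs hε₂ hδ₂) x).mpr ⟨hnx, hc2⟩
  subst hcd
  refine ⟨⟨H.arcC_mem hp hq hpq hε₁ hδ₁, H.arcC_mem hr hs hrs hε₂ hδ₂,
    H.arcC_ne hp hq hr hs hpr hps hε₁ hδ₁ hε₂ hδ₂,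
    x, hint1.1, hint2.1, hint1.2, hint2.2⟩, ?_, ?_⟩
  · rintro ⟨t, ht, hteq⟩
    exact H.arc_ne_hc hp hq ht hpq hε₁ hδ₁ hteq
  · rintro ⟨t, ht, hteq⟩
    exact H.arc_ne_hc hr hs ht hrs hε₂ hδ₂ hteq

lemma Good.QB_cross (H : Good k P v) {p r s : E3}
    (hp : p ∈ P) (hr : r ∈ P) (hs : s ∈ P)
    (hpr : p ≠ r) (hps : p ≠ s) (hrs : r ≠ s)
    {cd : Curve × Curve} (hQB : QB v p r s cd) :
    cd ∈ OCs P v ∧ IsHC P v cd.1 ∧ ¬IsHC P v cd.2 := by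
  obtain ⟨ε, δ, x, α, β, hε, hδ, hcd, hnx, hβ, hab, hcone⟩ := hQB
  have hvp := H.hv p hp
  have hint1 := (int_hc_iff (H.norm_mem hp) hvp.1 hvp.2 x).mpr ⟨hnx, α, β, hβ, hab⟩
  have hint2 := (int_arc_iff (by rw [sgn_norm hε]; exact H.norm_mem hr)
    (by rw [sgn_norm hδ]; exact H.norm_mem hs) (H.li2sm hr hs hrs hε hδ) x).mpr ⟨hnx, hcone⟩
  subst hcd
  refine ⟨⟨H.hcC_mem hp, H.arcC_mem hr hs hrs hε hδ,
    (H.arc_ne_hc hr hs hp hrs hε hδ).symm, x, hint1.1, hint2.1, hint1.2, hint2.2⟩,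
    ⟨p, hp, rfl⟩, ?_⟩
  rintro ⟨t, ht, hteq⟩
  exact H.arc_ne_hc hr hs ht hrs hε hδ hteq

lemma Good.OA_decode (H : Good k P v) {cd : Curve × Curve} (h1 : cd ∈ OCs P v)
    (h2 : ¬IsHC P v cd.1) (h3 : ¬IsHC P v cd.2) :
    ∃ p q r s : E3, ∃ ε₁ δ₁ ε₂ δ₂ aa bb : ℝ, ∃ x : E3,
      p ∈ P ∧ q ∈ P ∧ r ∈ P ∧ s ∈ P ∧ p ≠ q ∧ r ≠ s ∧ p ≠ r ∧ p ≠ s ∧ q ≠ r ∧ q ≠ s ∧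
      (ε₁ = 1 ∨ ε₁ = -1) ∧ (δ₁ = 1 ∨ δ₁ = -1) ∧ (ε₂ = 1 ∨ ε₂ = -1) ∧ (δ₂ = 1 ∨ δ₂ = -1) ∧
      cd = (arcC (ε₁ • p) (δ₁ • q), arcC (ε₂ • r) (δ₂ • s)) ∧
      ‖x‖ = 1 ∧ inCone (ε₁ • p) (δ₁ • q) x ∧ inCone (ε₂ • r) (δ₂ • s) x ∧
      x = aa • p + bb • q ∧ aa ≠ 0 ∧ bb ≠ 0 := by
  obtain ⟨hD1, hD2, hne, x, hx1, hx2, hnm1, hnm2⟩ := h1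
  rcases H.curve_cases hD1 with ⟨ε₁, δ₁, p, q, hε₁, hδ₁, hp, hq, hpq, hc1⟩ | hhc
  swap
  · exact absurd hhc h2
  rcases H.curve_cases hD2 with ⟨ε₂, δ₂, r, s, hε₂, hδ₂, hr, hs, hrs, hc2⟩ | hhc
  swap
  · exact absurd hhc h3
  rw [hc1] at hx1 hnm1
  rw [hc2] at hx2 hnm2
  have hint1 := (int_arc_iff (by rw [sgn_norm hε₁]; exact H.norm_mem hp)
    (by rw [sgn_norm hδ₁]; exact H.norm_mem hq) (H.li2sm hp hq hpq hε₁ hδ₁) x).mp ⟨hx1, hnm1⟩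
  have hint2 := (int_arc_iff (by rw [sgn_norm hε₂]; exact H.norm_mem hr)
    (by rw [sgn_norm hδ₂]; exact H.norm_mem hs) (H.li2sm hr hs hrs hε₂ hδ₂) x).mp ⟨hx2, hnm2⟩
  obtain ⟨hnx, hcone1⟩ := hint1
  obtain ⟨_, hcone2⟩ := hint2
  have hne' : arcC (ε₁ • p) (δ₁ • q) ≠ arcC (ε₂ • r) (δ₂ • s) := by
    rw [hc1, hc2] at hne
    exact hne
  have hpr : p ≠ r := by
    intro h0
    subst h0
    by_cases hqs : q = s
    · subst hqs
      obtain ⟨g1, g2⟩ := H.cone_same hp hq hpq hε₁ hδ₁ hε₂ hδ₂ hcone1 hcone2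
      exact hne' (by rw [g1, g2])
    · exact H.cone_adj hp hq hs hpq (fun h => hrs h) hqs hδ₁ hcone1 hcone2
  have hps : p ≠ s := by
    intro h0
    subst h0
    have hcone2' := inCone_swap hcone2
    by_cases hqr : q = r
    · subst hqr
      obtain ⟨g1, g2⟩ := H.cone_same hp hq hpq hε₁ hδ₁ hδ₂ hε₂ hcone1 hcone2'
      refine hne' ?_
      rw [g1, g2]
      exact (arcC_swap (H.li2sm hq hp (Ne.symm hpq) hε₂ hδ₂)).symm
    · exact H.cone_adj hp hq hr hpq (fun h => hrs h.symm) hqr hδ₁ hcone1 hcone2'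
  have hqr : q ≠ r := by
    intro h0
    subst h0
    exact H.cone_adj hq hp hs (Ne.symm hpq) (fun h => hrs h) hps hε₁
      (inCone_swap hcone1) hcone2
  have hqs : q ≠ s := by
    intro h0
    subst h0
    exact H.cone_adj hq hp hr (Ne.symm hpq) (fun h => hrs h.symm) hpr hε₁
      (inCone_swap hcone1) (inCone_swap hcone2)
  obtain ⟨s₁, t₁, hs₁, ht₁, hx₁⟩ := hcone1
  refine ⟨p, q, r, s, ε₁, δ₁, ε₂, δ₂, s₁ * ε₁, t₁ * δ₁, x, hp, hq, hr, hs, hpq, hrs,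
    hpr, hps, hqr, hqs, hε₁, hδ₁, hε₂, hδ₂, by rw [← hc1, ← hc2], hnx,
    ⟨s₁, t₁, hs₁, ht₁, hx₁⟩, hcone2, by rw [mul_smul, mul_smul]; exact hx₁,
    mulsgn_ne hs₁ hε₁, mulsgn_ne ht₁ hδ₁⟩

lemma Good.OBh_decode (H : Good k P v) {cd : Curve × Curve} (h1 : cd ∈ OCs P v)
    (h2 : IsHC P v cd.1) :
    ∃ p r s : E3, ∃ ε δ α β : ℝ, ∃ x : E3,
      p ∈ P ∧ r ∈ P ∧ s ∈ P ∧ p ≠ r ∧ p ≠ s ∧ r ≠ s ∧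
      (ε = 1 ∨ ε = -1) ∧ (δ = 1 ∨ δ = -1) ∧
      cd = (hcC p (v p), arcC (ε • r) (δ • s)) ∧
      ‖x‖ = 1 ∧ 0 < β ∧ x = α • p + β • (v p) ∧ inCone (ε • r) (δ • s) x := by
  obtain ⟨hD1, hD2, hne, x, hx1, hx2, hnm1, hnm2⟩ := h1
  obtain ⟨p, hp, hc1⟩ := h2
  rcases H.curve_cases hD2 with ⟨ε, δ, r, s, hε, hδ, hr, hs, hrs, hc2⟩ | ⟨t, ht, hc2⟩
  swap
  · -- both half-circles: impossible
    exfalso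
    have hpt : p ≠ t := by
      intro h0
      subst h0
      rw [hc1, hc2] at hne
      exact hne rfl
    rw [hc1] at hx1
    rw [hc2] at hx2
    have hx12 : x ∈ halfCircle p (v p) ∩ halfCircle t (v t) := ⟨hx1, hx2⟩
    rw [H.hdisj p hp t ht hpt] at hx12
    exact Set.notMem_empty x hx12
  rw [hc1] at hx1 hnm1
  rw [hc2] at hx2 hnm2
  have hvp := H.hv p hp
  have hint1 := (int_hc_iff (H.norm_mem hp) hvp.1 hvp.2 x).mp ⟨hx1, hnm1⟩
  have hint2 := (int_arc_iff (by rw [sgn_norm hε]; exact H.norm_mem hr)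
    (by rw [sgn_norm hδ]; exact H.norm_mem hs) (H.li2sm hr hs hrs hε hδ) x).mp ⟨hx2, hnm2⟩
  obtain ⟨hnx, α, β, hβ, hab⟩ := hint1
  obtain ⟨_, hcone⟩ := hint2
  have hpr : p ≠ r := by
    intro h0
    subst h0
    exact H.hc_arc_shared hp hs (fun h => hrs h) hδ hβ hab hcone
  have hps : p ≠ s := by
    intro h0
    subst h0
    exact H.hc_arc_shared hp hr (fun h => hrs h.symm) hε hβ hab (inCone_swap hcone)
  exact ⟨p, r, s, ε, δ, α, β, x, hp, hr, hs, hpr, hps, hrs, hε, hδ,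
    by rw [← hc1, ← hc2], hnx, hβ, hab, hcone⟩

end AP
namespace AP

attribute [local instance] Classical.propDecidable

variable {k : ℕ} {P : Set E3} {v : E3 → E3}

lemma Good.D_finite (H : Good k P v) : (drawingCurves P v P).Finite := by
  have hphat : (phat P).Finite := H.hfin.union (H.hfin.image _)
  have h1 : drawingCurves P v P ⊆
      (fun ab : E3 × E3 => ((arc ab.1 ab.2, {ab.1, ab.2}) : Curve)) '' ((phat P) ×ˢ (phat P)) ∪
      (fun p => ((halfCircle p (v p), {p, -p}) : Curve)) '' P := by
    rintro c (⟨a, b, ha, hb, _, _, rfl⟩ | ⟨p, hp, rfl⟩)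
    · exact Or.inl ⟨(a, b), ⟨ha, hb⟩, rfl⟩
    · exact Or.inr ⟨p, hp, rfl⟩
  exact (((hphat.prod hphat).image _).union (H.hfin.image _)).subset h1

lemma Good.OCs_finite (H : Good k P v) : (OCs P v).Finite := by
  refine ((H.D_finite.prod H.D_finite).subset ?_)
  rintro ⟨c, d⟩ ⟨h1, h2, _⟩
  exact ⟨h1, h2⟩

lemma crossing_eq_image :
    crossingPairs (drawingCurves P v P) = (fun cd : Curve × Curve => s(cd.1, cd.2)) '' (OCs P v) := by
  ext pr
  constructor
  · rintro ⟨c, hc, d, hd, hne, hx, rfl⟩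
    exact ⟨(c, d), ⟨hc, hd, hne, hx⟩, rfl⟩
  · rintro ⟨⟨c, d⟩, ⟨hc, hd, hne, hx⟩, rfl⟩
    exact ⟨c, hc, d, hd, hne, hx, rfl⟩

lemma OCs_swap {cd : Curve × Curve} (h : cd ∈ OCs P v) : cd.swap ∈ OCs P v := by
  obtain ⟨h1, h2, h3, x, h4, h5, h6, h7⟩ := h
  exact ⟨h2, h1, Ne.symm h3, x, h5, h4, h7, h6⟩

lemma card_fiber_const {α β : Type*} [DecidableEq β] (s : Finset α) (t : Finset β)
    (f : α → β) (m : ℕ) (hmap : ∀ a ∈ s, f a ∈ t)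
    (hfib : ∀ b ∈ t, (s.filter (fun a => f a = b)).card = m) :
    s.card = m * t.card := by
  rw [Finset.card_eq_sum_card_fiberwise hmap, Finset.sum_congr rfl hfib,
    Finset.sum_const, smul_eq_mul, mul_comm]

/-- Ordered crossings are twice the unordered crossing pairs. -/
lemma Good.ncard_OCs (H : Good k P v) :
    (OCs P v).ncard = 2 * (crossingPairs (drawingCurves P v P)).ncard := by
  classical
  set S := H.OCs_finite.toFinset with hS
  have hSmem : ∀ cd : Curve × Curve, cd ∈ S ↔ cd ∈ OCs P v :=
    fun cd => H.OCs_finite.mem_toFinset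
  set T := S.image (fun cd : Curve × Curve => s(cd.1, cd.2)) with hT
  have hmap : ∀ cd ∈ S, s(cd.1, cd.2) ∈ T := fun cd h => Finset.mem_image_of_mem _ h
  have hfib : ∀ e ∈ T, (S.filter (fun cd => s(cd.1, cd.2) = e)).card = 2 := by
    intro e he
    obtain ⟨⟨c, d⟩, hcd, rfl⟩ := Finset.mem_image.mp he
    have hne : c ≠ d := ((hSmem _).mp hcd).2.2.1
    have hset : S.filter (fun cd => s(cd.1, cd.2) = s(c, d)) =
        {(c, d), (d, c)} := by
      ext ⟨c', d'⟩
      simp only [Finset.mem_filter, Finset.mem_insert, Finset.mem_singleton]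
      constructor
      · rintro ⟨hmem, heq⟩
        rcases Sym2.eq_iff.mp heq with ⟨rfl, rfl⟩ | ⟨rfl, rfl⟩
        · exact Or.inl rfl
        · exact Or.inr rfl
      · rintro (h | h)
        · obtain ⟨rfl, rfl⟩ := Prod.mk.inj h
          exact ⟨hcd, rfl⟩
        · obtain ⟨rfl, rfl⟩ := Prod.mk.inj h
          refine ⟨?_, Sym2.eq_iff.mpr (Or.inr ⟨rfl, rfl⟩)⟩
          rw [hSmem]
          exact OCs_swap ((hSmem _).mp hcd)
    rw [hset, Finset.card_insert_of_notMem (by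
      simp only [Finset.mem_singleton]
      intro h
      rw [Prod.mk.injEq] at h
      exact hne h.1), Finset.card_singleton]
  have hcount := card_fiber_const S T _ 2 hmap hfib
  have h1 : (OCs P v).ncard = S.card := by
    rw [hS]
    exact Set.ncard_eq_toFinset_card _ H.OCs_finite
  have h2 : (crossingPairs (drawingCurves P v P)).ncard = T.card := by
    rw [crossing_eq_image (P := P) (v := v), show (fun cd : Curve × Curve => s(cd.1, cd.2)) '' (OCs P v) = (↑T : Set (Sym2 Curve)) by
      rw [hT, Finset.coe_image, Set.Finite.coe_toFinset], Set.ncard_coe_finset]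
  rw [h1, h2, hcount]

lemma card_dpairs {α : Type*} [DecidableEq α] (A : Finset α) :
    ((A ×ˢ A).filter (fun t => t.1 ≠ t.2)).card = A.card * (A.card - 1) := by
  have hmap : ∀ t ∈ (A ×ˢ A).filter (fun t => t.1 ≠ t.2), Prod.fst t ∈ A := by
    rintro ⟨a, b⟩ h
    exact (Finset.mem_product.mp (Finset.mem_filter.mp h).1).1
  rw [Finset.card_eq_sum_card_fiberwise hmap]
  have hconst : ∀ a ∈ A,
      (((A ×ˢ A).filter (fun t => t.1 ≠ t.2)).filter (fun t => t.1 = a)).card =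
        A.card - 1 := by
    intro a ha
    have hset : ((A ×ˢ A).filter (fun t => t.1 ≠ t.2)).filter (fun t => t.1 = a) =
        {a} ×ˢ (A.erase a) := by
      ext ⟨x, y⟩
      simp only [Finset.mem_filter, Finset.mem_product, Finset.mem_singleton,
        Finset.mem_erase]
      constructor
      · rintro ⟨⟨⟨hx, hy⟩, hxy⟩, rfl⟩
        exact ⟨rfl, fun h => hxy h.symm, hy⟩
      · rintro ⟨rfl, hya, hy⟩
        exact ⟨⟨⟨ha, hy⟩, fun h => hya h.symm⟩, rfl⟩
    rw [hset, Finset.card_product, Finset.card_singleton, Finset.card_erase_of_mem ha,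
      one_mul]
  rw [Finset.sum_congr rfl hconst, Finset.sum_const, smul_eq_mul]

lemma card_dtriples {α : Type*} [DecidableEq α] (A : Finset α) :
    ((A ×ˢ A ×ˢ A).filter
      (fun t => t.1 ≠ t.2.1 ∧ t.1 ≠ t.2.2 ∧ t.2.1 ≠ t.2.2)).card =
      A.card * ((A.card - 1) * (A.card - 2)) := by
  have hmap : ∀ t ∈ (A ×ˢ A ×ˢ A).filter
      (fun t => t.1 ≠ t.2.1 ∧ t.1 ≠ t.2.2 ∧ t.2.1 ≠ t.2.2), Prod.fst t ∈ A := by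
    rintro ⟨a, b, c⟩ h
    exact (Finset.mem_product.mp (Finset.mem_filter.mp h).1).1
  rw [Finset.card_eq_sum_card_fiberwise hmap]
  have hconst : ∀ a ∈ A,
      (((A ×ˢ A ×ˢ A).filter
        (fun t => t.1 ≠ t.2.1 ∧ t.1 ≠ t.2.2 ∧ t.2.1 ≠ t.2.2)).filter
          (fun t => t.1 = a)).card = (A.card - 1) * (A.card - 2) := by
    intro a ha
    have hset : ((A ×ˢ A ×ˢ A).filter
        (fun t => t.1 ≠ t.2.1 ∧ t.1 ≠ t.2.2 ∧ t.2.1 ≠ t.2.2)).filter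
          (fun t => t.1 = a) =
        {a} ×ˢ (((A.erase a) ×ˢ (A.erase a)).filter (fun t => t.1 ≠ t.2)) := by
      ext ⟨x, y, z⟩
      simp only [Finset.mem_filter, Finset.mem_product, Finset.mem_singleton,
        Finset.mem_erase]
      constructor
      · rintro ⟨⟨⟨hx, hy, hz⟩, h1, h2, h3⟩, rfl⟩
        exact ⟨rfl, ⟨⟨fun h => h1 h.symm, hy⟩, ⟨fun h => h2 h.symm, hz⟩⟩, h3⟩
      · rintro ⟨rfl, ⟨⟨hya, hy⟩, ⟨hza, hz⟩⟩, hyz⟩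
        exact ⟨⟨⟨ha, hy, hz⟩, fun h => hya h.symm, fun h => hza h.symm, hyz⟩, rfl⟩
    rw [hset, Finset.card_product, Finset.card_singleton, one_mul, card_dpairs,
      Finset.card_erase_of_mem ha]
    have he : A.card - 1 - 1 = A.card - 2 := by omega
    rw [he]
  rw [Finset.sum_congr rfl hconst, Finset.sum_const, smul_eq_mul]

lemma card_dquads {α : Type*} [DecidableEq α] (A : Finset α) :
    (((A ×ˢ A) ×ˢ (A ×ˢ A)).filter
      (fun t => t.1.1 ≠ t.1.2 ∧ t.1.1 ≠ t.2.1 ∧ t.1.1 ≠ t.2.2 ∧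
        t.1.2 ≠ t.2.1 ∧ t.1.2 ≠ t.2.2 ∧ t.2.1 ≠ t.2.2)).card =
      (A.card * (A.card - 1)) * ((A.card - 2) * (A.card - 3)) := by
  have hmap : ∀ t ∈ ((A ×ˢ A) ×ˢ (A ×ˢ A)).filter
      (fun t => t.1.1 ≠ t.1.2 ∧ t.1.1 ≠ t.2.1 ∧ t.1.1 ≠ t.2.2 ∧
        t.1.2 ≠ t.2.1 ∧ t.1.2 ≠ t.2.2 ∧ t.2.1 ≠ t.2.2),
      Prod.fst t ∈ (A ×ˢ A).filter (fun u => u.1 ≠ u.2) := by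
    rintro ⟨⟨p, q⟩, ⟨r, s⟩⟩ h
    obtain ⟨hmem, h1, _⟩ := Finset.mem_filter.mp h
    obtain ⟨hpq, _⟩ := Finset.mem_product.mp hmem
    exact Finset.mem_filter.mpr ⟨hpq, h1⟩
  rw [Finset.card_eq_sum_card_fiberwise hmap]
  have hconst : ∀ u ∈ (A ×ˢ A).filter (fun u => u.1 ≠ u.2),
      ((((A ×ˢ A) ×ˢ (A ×ˢ A)).filter
        (fun t => t.1.1 ≠ t.1.2 ∧ t.1.1 ≠ t.2.1 ∧ t.1.1 ≠ t.2.2 ∧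
          t.1.2 ≠ t.2.1 ∧ t.1.2 ≠ t.2.2 ∧ t.2.1 ≠ t.2.2)).filter
            (fun t => t.1 = u)).card = (A.card - 2) * (A.card - 3) := by
    rintro ⟨p, q⟩ hu
    obtain ⟨hmem, hpq⟩ := Finset.mem_filter.mp hu
    obtain ⟨hp, hq⟩ := Finset.mem_product.mp hmem
    have hset : (((A ×ˢ A) ×ˢ (A ×ˢ A)).filter
        (fun t => t.1.1 ≠ t.1.2 ∧ t.1.1 ≠ t.2.1 ∧ t.1.1 ≠ t.2.2 ∧
          t.1.2 ≠ t.2.1 ∧ t.1.2 ≠ t.2.2 ∧ t.2.1 ≠ t.2.2)).filter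
            (fun t => t.1 = (p, q)) =
        {(p, q)} ×ˢ ((((A.erase p).erase q) ×ˢ ((A.erase p).erase q)).filter
          (fun u => u.1 ≠ u.2)) := by
      ext ⟨⟨x, y⟩, ⟨z, w⟩⟩
      simp only [Finset.mem_filter, Finset.mem_product, Finset.mem_singleton,
        Finset.mem_erase, Prod.ext_iff]
      constructor
      · rintro ⟨⟨⟨⟨hx, hy⟩, hz, hw⟩, h1, h2, h3, h4, h5, h6⟩, hxp, hyq⟩
        subst hxp; subst hyq
        exact ⟨⟨rfl, rfl⟩, ⟨⟨⟨fun h => h4 h.symm, fun h => h2 h.symm, hz⟩,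
          ⟨fun h => h5 h.symm, fun h => h3 h.symm, hw⟩⟩, h6⟩⟩
      · rintro ⟨⟨rfl, rfl⟩, ⟨⟨⟨hzq, hzp, hz⟩, ⟨hwq, hwp, hw⟩⟩, hzw⟩⟩
        exact ⟨⟨⟨⟨hp, hq⟩, hz, hw⟩, hpq, fun h => hzp h.symm, fun h => hwp h.symm,
          fun h => hzq h.symm, fun h => hwq h.symm, hzw⟩, rfl, rfl⟩
    rw [hset, Finset.card_product, Finset.card_singleton, one_mul, card_dpairs,
      Finset.card_erase_of_mem (Finset.mem_erase.mpr ⟨Ne.symm hpq, hq⟩),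
      Finset.card_erase_of_mem hp]
    have he2 : A.card - 1 - 1 - 1 = A.card - 2 - 1 := by omega
    have he1 : A.card - 1 - 1 = A.card - 2 := by omega
    have he3 : A.card - 2 - 1 = A.card - 3 := by omega
    rw [he1, he3]
  rw [Finset.sum_congr rfl hconst, Finset.sum_const, smul_eq_mul, card_dpairs]

end AP
namespace AP

attribute [local instance] Classical.propDecidable

variable {k : ℕ} {P : Set E3} {v : E3 → E3}

def bsign (a : ℝ) : Bool := if 0 < a then true else false

lemma bsign_iff (a : ℝ) : 0 < a ↔ bsign a = true := by
  unfold bsign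
  split_ifs with h
  · simp [h]
  · simp [h]

lemma bsign_eq {a : ℝ} {σ : Bool} (h : 0 < a ↔ σ = true) : σ = bsign a := by
  unfold bsign
  split_ifs with h'
  · exact h.mp h'
  · cases σ
    · rfl
    · exact absurd (h.mpr rfl) h'

lemma cone_pm {a b x y : E3} (hli : LinearIndependent ℝ ![a, b]) (h1 : inCone a b x)
    (h2 : inCone a b y) (h3 : y = x ∨ y = -x) : y = x := by
  rcases h3 with h3 | h3
  · exact h3
  exfalso
  obtain ⟨s, t, hs, ht, hx⟩ := h1
  obtain ⟨s', t', hs', ht', hy⟩ := h2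
  have h4 : y = (-s) • a + (-t) • b := by rw [h3, hx]; module
  obtain ⟨e1, _⟩ := coord_unique hli (hy.symm.trans h4)
  linarith

noncomputable def PsiA (t : ((E3 × E3) × (E3 × E3)) × Bool) : Curve × Curve :=
  if h : ∃ cd, QA t.1.1.1 t.1.1.2 t.1.2.1 t.1.2.2 t.2 cd then h.choose else ((∅, ∅), (∅, ∅))

noncomputable def PhiB (v : E3 → E3) (t : E3 × E3 × E3) : Curve × Curve :=
  if h : ∃ cd, QB v t.1 t.2.1 t.2.2 cd then h.choose else ((∅, ∅), (∅, ∅))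

lemma Good.cardOA (H : Good k P v) :
    ((((H.hfin.toFinset ×ˢ H.hfin.toFinset) ×ˢ (H.hfin.toFinset ×ˢ H.hfin.toFinset)).filter
        (fun t => t.1.1 ≠ t.1.2 ∧ t.1.1 ≠ t.2.1 ∧ t.1.1 ≠ t.2.2 ∧ t.1.2 ≠ t.2.1 ∧
          t.1.2 ≠ t.2.2 ∧ t.2.1 ≠ t.2.2)) ×ˢ (Finset.univ : Finset Bool)).card =
      4 * ((H.OCs_finite.toFinset).filter
        (fun cd => ¬IsHC P v cd.1 ∧ ¬IsHC P v cd.2)).card := by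
  apply card_fiber_const _ _ (fun t => PsiA t) 4
  · rintro ⟨⟨⟨p, q⟩, ⟨r, s⟩⟩, σ⟩ ht
    obtain ⟨hT4, -⟩ := Finset.mem_product.mp ht
    obtain ⟨hmem, h1, h2, h3, h4, h5, h6⟩ := Finset.mem_filter.mp hT4
    obtain ⟨hm1, hm2⟩ := Finset.mem_product.mp hmem
    obtain ⟨hp, hq⟩ := Finset.mem_product.mp hm1
    obtain ⟨hr, hs⟩ := Finset.mem_product.mp hm2
    rw [Set.Finite.mem_toFinset] at hp hq hr hs
    have hex := H.QA_exists hp hq hr hs h1 h2 h3 h4 h5 h6 σ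
    have hQA : QA p q r s σ (PsiA (((p, q), (r, s)), σ)) := by
      rw [PsiA, dif_pos hex]
      exact hex.choose_spec
    obtain ⟨hOC, hn1, hn2⟩ := H.QA_cross hp hq hr hs h1 h2 h3 h4 h5 h6 hQA
    exact Finset.mem_filter.mpr ⟨H.OCs_finite.mem_toFinset.mpr hOC, hn1, hn2⟩
  · intro cd hcd
    obtain ⟨hS, hn1, hn2⟩ := Finset.mem_filter.mp hcd
    have hOC := H.OCs_finite.mem_toFinset.mp hS
    obtain ⟨p₀, q₀, r₀, s₀, ε₁, δ₁, ε₂, δ₂, aa, bb, x, hp₀, hq₀, hr₀, hs₀, hpq, hrs,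
      hpr, hps, hqr, hqs, hε₁, hδ₁, hε₂, hδ₂, hcdeq, hnx, hcone1, hcone2, hxab, haa, hbb⟩ :=
      H.OA_decode hOC hn1 hn2
    have hxab2 : x = bb • q₀ + aa • p₀ := by rw [hxab]; module
    have hsw1 : arcC (ε₁ • p₀) (δ₁ • q₀) = arcC (δ₁ • q₀) (ε₁ • p₀) :=
      arcC_swap (H.li2sm hp₀ hq₀ hpq hε₁ hδ₁)
    have hsw2 : arcC (ε₂ • r₀) (δ₂ • s₀) = arcC (δ₂ • s₀) (ε₂ • r₀) :=
      arcC_swap (H.li2sm hr₀ hs₀ hrs hε₂ hδ₂)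
    have hQ1 : QA p₀ q₀ r₀ s₀ (bsign aa) cd :=
      ⟨ε₁, δ₁, ε₂, δ₂, x, aa, bb, hε₁, hδ₁, hε₂, hδ₂, hcdeq, hnx, hcone1, hcone2,
        hxab, bsign_iff aa⟩
    have hQ2 : QA q₀ p₀ r₀ s₀ (bsign bb) cd :=
      ⟨δ₁, ε₁, ε₂, δ₂, x, bb, aa, hδ₁, hε₁, hε₂, hδ₂, by rw [hcdeq, hsw1], hnx,
        inCone_swap hcone1, hcone2, hxab2, bsign_iff bb⟩
    have hQ3 : QA p₀ q₀ s₀ r₀ (bsign aa) cd :=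
      ⟨ε₁, δ₁, δ₂, ε₂, x, aa, bb, hε₁, hδ₁, hδ₂, hε₂, by rw [hcdeq, hsw2], hnx,
        hcone1, inCone_swap hcone2, hxab, bsign_iff aa⟩
    have hQ4 : QA q₀ p₀ s₀ r₀ (bsign bb) cd :=
      ⟨δ₁, ε₁, δ₂, ε₂, x, bb, aa, hδ₁, hε₁, hδ₂, hε₂, by rw [hcdeq, hsw1, hsw2], hnx,
        inCone_swap hcone1, inCone_swap hcone2, hxab2, bsign_iff bb⟩
    have hP1 : PsiA (((p₀, q₀), (r₀, s₀)), bsign aa) = cd := by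
      have hex : ∃ cd', QA p₀ q₀ r₀ s₀ (bsign aa) cd' := ⟨cd, hQ1⟩
      rw [PsiA, dif_pos hex]
      exact H.QA_unique hp₀ hq₀ hr₀ hs₀ hpq hpr hps hqr hqs hrs hex.choose_spec hQ1
    have hP2 : PsiA (((q₀, p₀), (r₀, s₀)), bsign bb) = cd := by
      have hex : ∃ cd', QA q₀ p₀ r₀ s₀ (bsign bb) cd' := ⟨cd, hQ2⟩
      rw [PsiA, dif_pos hex]
      exact H.QA_unique hq₀ hp₀ hr₀ hs₀ (Ne.symm hpq) hqr hqs hpr hps hrs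
        hex.choose_spec hQ2
    have hP3 : PsiA (((p₀, q₀), (s₀, r₀)), bsign aa) = cd := by
      have hex : ∃ cd', QA p₀ q₀ s₀ r₀ (bsign aa) cd' := ⟨cd, hQ3⟩
      rw [PsiA, dif_pos hex]
      exact H.QA_unique hp₀ hq₀ hs₀ hr₀ hpq hps hpr hqs hqr (Ne.symm hrs)
        hex.choose_spec hQ3
    have hP4 : PsiA (((q₀, p₀), (s₀, r₀)), bsign bb) = cd := by
      have hex : ∃ cd', QA q₀ p₀ s₀ r₀ (bsign bb) cd' := ⟨cd, hQ4⟩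
      rw [PsiA, dif_pos hex]
      exact H.QA_unique hq₀ hp₀ hs₀ hr₀ (Ne.symm hpq) hqs hqr hps hpr (Ne.symm hrs)
        hex.choose_spec hQ4
    have hfs : (((((H.hfin.toFinset ×ˢ H.hfin.toFinset) ×ˢ
          (H.hfin.toFinset ×ˢ H.hfin.toFinset)).filter
        (fun t => t.1.1 ≠ t.1.2 ∧ t.1.1 ≠ t.2.1 ∧ t.1.1 ≠ t.2.2 ∧ t.1.2 ≠ t.2.1 ∧
          t.1.2 ≠ t.2.2 ∧ t.2.1 ≠ t.2.2)) ×ˢ (Finset.univ : Finset Bool)).filter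
          (fun t => PsiA t = cd)) =
        {(((p₀, q₀), (r₀, s₀)), bsign aa), (((q₀, p₀), (r₀, s₀)), bsign bb),
          (((p₀, q₀), (s₀, r₀)), bsign aa), (((q₀, p₀), (s₀, r₀)), bsign bb)} := by
      ext ⟨⟨⟨p, q⟩, ⟨r, s⟩⟩, σ⟩
      simp only [Finset.mem_filter, Finset.mem_product, Finset.mem_univ, and_true,
        Finset.mem_insert, Finset.mem_singleton, Set.Finite.mem_toFinset]
      constructor
      · rintro ⟨⟨⟨⟨hp, hq⟩, hr, hs⟩, h1, h2, h3, h4, h5, h6⟩, hPsi⟩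
        have hex := H.QA_exists hp hq hr hs h1 h2 h3 h4 h5 h6 σ
        have hQA : QA p q r s σ cd := by
          rw [PsiA, dif_pos hex] at hPsi
          rw [← hPsi]
          exact hex.choose_spec
        obtain ⟨e₁, f₁, e₂, f₂, x', a', b', he₁, hf₁, he₂, hf₂, hceq, hnx', hco1, hco2,
          hx'ab, hσc⟩ := hQA
        have hfst : arcC (e₁ • p) (f₁ • q) = arcC (ε₁ • p₀) (δ₁ • q₀) :=
          congrArg Prod.fst (hceq.symm.trans hcdeq)
        have hsnd : arcC (e₂ • r) (f₂ • s) = arcC (ε₂ • r₀) (δ₂ • s₀) :=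
          congrArg Prod.snd (hceq.symm.trans hcdeq)
        have hpair1 := H.pairset_eq hp hq hp₀ hq₀ he₁ hf₁ hε₁ hδ₁
          (congrArg Prod.snd hfst)
        have hpair2 := H.pairset_eq hr hs hr₀ hs₀ he₂ hf₂ hε₂ hδ₂
          (congrArg Prod.snd hsnd)
        -- x' lies in the cone of the first arc of cd, in (p₀,q₀) coordinates
        have hco1' : inCone (ε₁ • p₀) (δ₁ • q₀) x' := by
          rcases hpair1 with ⟨g1, g2, g3, g4⟩ | ⟨g1, g2, g3, g4⟩
          · rw [g1, g2, g3, g4] at hco1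
            exact hco1
          · rw [g1, g2, g3, g4] at hco1
            exact inCone_swap hco1
        have hco2' : inCone (ε₂ • r₀) (δ₂ • s₀) x' := by
          rcases hpair2 with ⟨g1, g2, g3, g4⟩ | ⟨g1, g2, g3, g4⟩
          · rw [g1, g2, g3, g4] at hco2
            exact hco2
          · rw [g1, g2, g3, g4] at hco2
            exact inCone_swap hco2
        have hxx : x' = x := by
          refine cone_pm (H.li2sm hp₀ hq₀ hpq hε₁ hδ₁) hcone1 hco1' ?_
          exact H.unique_cross hp₀ hr₀ hs₀ hpr hps hrs ⟨aa, bb, hxab⟩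
            (inCone_coeffs hco1') (inCone_coeffs hcone2) (inCone_coeffs hco2') hnx hnx'
        rcases hpair1 with ⟨g1, g2, g3, g4⟩ | ⟨g1, g2, g3, g4⟩ <;>
          rcases hpair2 with ⟨j1, j2, j3, j4⟩ | ⟨j1, j2, j3, j4⟩
        · -- (p,q) = (p₀,q₀), (r,s) = (r₀,s₀)
          refine Or.inl ?_
          rw [g1, g3, j1, j3]
          have ha' : a' = aa := by
            rw [g1, g3, hxx] at hx'ab
            exact (coord_unique (H.li2P hp₀ hq₀ hpq) (hx'ab.symm.trans hxab)).1
          rw [show σ = bsign aa by rw [← ha']; exact bsign_eq hσc]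
        · refine Or.inr (Or.inr (Or.inl ?_))
          rw [g1, g3, j1, j3]
          have ha' : a' = aa := by
            rw [g1, g3, hxx] at hx'ab
            exact (coord_unique (H.li2P hp₀ hq₀ hpq) (hx'ab.symm.trans hxab)).1
          rw [show σ = bsign aa by rw [← ha']; exact bsign_eq hσc]
        · refine Or.inr (Or.inl ?_)
          rw [g1, g3, j1, j3]
          have ha' : a' = bb := by
            rw [g1, g3, hxx] at hx'ab
            have hx'ab2 : x = b' • p₀ + a' • q₀ := by rw [hx'ab]; module
            exact (coord_unique (H.li2P hp₀ hq₀ hpq) (hx'ab2.symm.trans hxab)).2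
          rw [show σ = bsign bb by rw [← ha']; exact bsign_eq hσc]
        · refine Or.inr (Or.inr (Or.inr ?_))
          rw [g1, g3, j1, j3]
          have ha' : a' = bb := by
            rw [g1, g3, hxx] at hx'ab
            have hx'ab2 : x = b' • p₀ + a' • q₀ := by rw [hx'ab]; module
            exact (coord_unique (H.li2P hp₀ hq₀ hpq) (hx'ab2.symm.trans hxab)).2
          rw [show σ = bsign bb by rw [← ha']; exact bsign_eq hσc]
      · rintro (h | h | h | h) <;> simp only [Prod.mk.injEq] at h <;>
          obtain ⟨⟨⟨rfl, rfl⟩, rfl, rfl⟩, rfl⟩ := h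
        · exact ⟨⟨⟨⟨hp₀, hq₀⟩, hr₀, hs₀⟩, hpq, hpr, hps, hqr, hqs, hrs⟩, hP1⟩
        · exact ⟨⟨⟨⟨hq₀, hp₀⟩, hr₀, hs₀⟩, Ne.symm hpq, hqr, hqs, hpr, hps, hrs⟩, hP2⟩
        · exact ⟨⟨⟨⟨hp₀, hq₀⟩, hs₀, hr₀⟩, hpq, hps, hpr, hqs, hqr, Ne.symm hrs⟩, hP3⟩
        · exact ⟨⟨⟨⟨hq₀, hp₀⟩, hs₀, hr₀⟩, Ne.symm hpq, hqs, hqr, hps, hpr,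
            Ne.symm hrs⟩, hP4⟩
    rw [hfs]
    have hne12 : (((p₀, q₀), (r₀, s₀)), bsign aa) ≠ (((q₀, p₀), (r₀, s₀)), bsign bb) :=
      fun h => hpq (congrArg (fun t => t.1.1.1) h)
    have hne13 : (((p₀, q₀), (r₀, s₀)), bsign aa) ≠ (((p₀, q₀), (s₀, r₀)), bsign aa) :=
      fun h => hrs (congrArg (fun t => t.1.2.1) h)
    have hne14 : (((p₀, q₀), (r₀, s₀)), bsign aa) ≠ (((q₀, p₀), (s₀, r₀)), bsign bb) :=
      fun h => hpq (congrArg (fun t => t.1.1.1) h)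
    have hne23 : (((q₀, p₀), (r₀, s₀)), bsign bb) ≠ (((p₀, q₀), (s₀, r₀)), bsign aa) :=
      fun h => hpq (congrArg (fun t => t.1.1.1) h).symm
    have hne24 : (((q₀, p₀), (r₀, s₀)), bsign bb) ≠ (((q₀, p₀), (s₀, r₀)), bsign bb) :=
      fun h => hrs (congrArg (fun t => t.1.2.1) h)
    have hne34 : (((p₀, q₀), (s₀, r₀)), bsign aa) ≠ (((q₀, p₀), (s₀, r₀)), bsign bb) :=
      fun h => hpq (congrArg (fun t => t.1.1.1) h)
    rw [Finset.card_insert_of_notMem (by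
        simp only [Finset.mem_insert, Finset.mem_singleton]
        push_neg
        exact ⟨hne12, hne13, hne14⟩),
      Finset.card_insert_of_notMem (by
        simp only [Finset.mem_insert, Finset.mem_singleton]
        push_neg
        exact ⟨hne23, hne24⟩),
      Finset.card_insert_of_notMem (by
        simp only [Finset.mem_singleton]
        exact hne34),
      Finset.card_singleton]

end AP
namespace AP

attribute [local instance] Classical.propDecidable

variable {k : ℕ} {P : Set E3} {v : E3 → E3}

lemma Good.cardOB (H : Good k P v) :
    ((H.hfin.toFinset ×ˢ H.hfin.toFinset ×ˢ H.hfin.toFinset).filter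
        (fun t => t.1 ≠ t.2.1 ∧ t.1 ≠ t.2.2 ∧ t.2.1 ≠ t.2.2)).card =
      2 * ((H.OCs_finite.toFinset).filter (fun cd => IsHC P v cd.1)).card := by
  apply card_fiber_const _ _ (fun t => PhiB v t) 2
  · rintro ⟨p, r, s⟩ ht
    obtain ⟨hmem, h1, h2, h3⟩ := Finset.mem_filter.mp ht
    obtain ⟨hp, hm⟩ := Finset.mem_product.mp hmem
    obtain ⟨hr, hs⟩ := Finset.mem_product.mp hm
    rw [Set.Finite.mem_toFinset] at hp hr hs
    have hex := H.QB_exists hp hr hs h1 h2 h3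
    have hQB : QB v p r s (PhiB v (p, r, s)) := by
      rw [PhiB, dif_pos hex]
      exact hex.choose_spec
    obtain ⟨hOC, hh1, -⟩ := H.QB_cross hp hr hs h1 h2 h3 hQB
    exact Finset.mem_filter.mpr ⟨H.OCs_finite.mem_toFinset.mpr hOC, hh1⟩
  · intro cd hcd
    obtain ⟨hS, hh⟩ := Finset.mem_filter.mp hcd
    have hOC := H.OCs_finite.mem_toFinset.mp hS
    obtain ⟨p₀, r₀, s₀, ε, δ, α, β, x, hp₀, hr₀, hs₀, hpr, hps, hrs, hε, hδ, hcdeq,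
      hnx, hβ, hab, hcone⟩ := H.OBh_decode hOC hh
    have hsw : arcC (ε • r₀) (δ • s₀) = arcC (δ • s₀) (ε • r₀) :=
      arcC_swap (H.li2sm hr₀ hs₀ hrs hε hδ)
    have hQ1 : QB v p₀ r₀ s₀ cd := ⟨ε, δ, x, α, β, hε, hδ, hcdeq, hnx, hβ, hab, hcone⟩
    have hQ2 : QB v p₀ s₀ r₀ cd :=
      ⟨δ, ε, x, α, β, hδ, hε, by rw [hcdeq, hsw], hnx, hβ, hab, inCone_swap hcone⟩
    have hP1 : PhiB v (p₀, r₀, s₀) = cd := by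
      have hex : ∃ cd', QB v p₀ r₀ s₀ cd' := ⟨cd, hQ1⟩
      rw [PhiB, dif_pos hex]
      exact H.QB_unique hp₀ hr₀ hs₀ hpr hps hrs hex.choose_spec hQ1
    have hP2 : PhiB v (p₀, s₀, r₀) = cd := by
      have hex : ∃ cd', QB v p₀ s₀ r₀ cd' := ⟨cd, hQ2⟩
      rw [PhiB, dif_pos hex]
      exact H.QB_unique hp₀ hs₀ hr₀ hps hpr (Ne.symm hrs) hex.choose_spec hQ2
    have hfs : ((H.hfin.toFinset ×ˢ H.hfin.toFinset ×ˢ H.hfin.toFinset).filter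
        (fun t => t.1 ≠ t.2.1 ∧ t.1 ≠ t.2.2 ∧ t.2.1 ≠ t.2.2)).filter
          (fun t => PhiB v t = cd) = {(p₀, r₀, s₀), (p₀, s₀, r₀)} := by
      ext ⟨p, r, s⟩
      simp only [Finset.mem_filter, Finset.mem_product, Finset.mem_insert,
        Finset.mem_singleton, Set.Finite.mem_toFinset]
      constructor
      · rintro ⟨⟨⟨hp, hr, hs⟩, h1, h2, h3⟩, hPhi⟩
        have hex := H.QB_exists hp hr hs h1 h2 h3
        have hQB : QB v p r s cd := by
          rw [PhiB, dif_pos hex] at hPhi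
          rw [← hPhi]
          exact hex.choose_spec
        obtain ⟨e, f, x', α', β', he, hf, hceq, hnx', hβ', hab', hco'⟩ := hQB
        have hfst : hcC p (v p) = hcC p₀ (v p₀) :=
          congrArg Prod.fst (hceq.symm.trans hcdeq)
        have hpp : p = p₀ := by
          have hsnd : ({p, -p} : Set E3) = {p₀, -p₀} := congrArg Prod.snd hfst
          rcases Set.pair_eq_pair_iff.mp hsnd with ⟨h4, -⟩ | ⟨h4, -⟩
          · exact h4
          · exfalso
            refine H.neg_notmem hp₀ ?_
            rw [← h4]
            exact hp
        subst hpp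
        have hsnd2 : arcC (e • r) (f • s) = arcC (ε • r₀) (δ • s₀) :=
          congrArg Prod.snd (hceq.symm.trans hcdeq)
        have hpair := H.pairset_eq hr hs hr₀ hs₀ he hf hε hδ (congrArg Prod.snd hsnd2)
        rcases hpair with ⟨g1, -, g3, -⟩ | ⟨g1, -, g3, -⟩
        · left
          rw [g1, g3]
        · right
          rw [g1, g3]
      · rintro (h | h) <;> simp only [Prod.mk.injEq] at h <;> obtain ⟨rfl, rfl, rfl⟩ := h
        · exact ⟨⟨⟨hp₀, hr₀, hs₀⟩, hpr, hps, hrs⟩, hP1⟩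
        · exact ⟨⟨⟨hp₀, hs₀, hr₀⟩, hps, hpr, Ne.symm hrs⟩, hP2⟩
    rw [hfs, Finset.card_insert_of_notMem (by
        simp only [Finset.mem_singleton]
        intro h
        exact hrs (congrArg (fun t : E3 × E3 × E3 => t.2.1) h)),
      Finset.card_singleton]

lemma Good.hc_not_hc2 (H : Good k P v) {cd : Curve × Curve} (hOC : cd ∈ OCs P v)
    (hh : IsHC P v cd.1) : ¬IsHC P v cd.2 := by
  obtain ⟨p₀, r₀, s₀, ε, δ, α, β, x, hp₀, hr₀, hs₀, hpr, hps, hrs, hε, hδ, hcdeq,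
    hnx, hβ, hab, hcone⟩ := H.OBh_decode hOC hh
  rintro ⟨t, ht, h2⟩
  have h3 : cd.2 = arcC (ε • r₀) (δ • s₀) := by rw [hcdeq]
  exact H.arc_ne_hc hr₀ hs₀ ht hrs hε hδ (h3.symm.trans h2)

lemma Good.card_split (H : Good k P v) :
    (H.OCs_finite.toFinset).card =
      ((H.OCs_finite.toFinset).filter (fun cd => ¬IsHC P v cd.1 ∧ ¬IsHC P v cd.2)).card +
      2 * ((H.OCs_finite.toFinset).filter (fun cd => IsHC P v cd.1)).card := by
  have h1 := Finset.card_filter_add_card_filter_not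
    (s := H.OCs_finite.toFinset) (p := fun cd => IsHC P v cd.1)
  have h2 := Finset.card_filter_add_card_filter_not
    (s := (H.OCs_finite.toFinset).filter (fun cd => ¬IsHC P v cd.1))
    (p := fun cd => IsHC P v cd.2)
  rw [Finset.filter_filter, Finset.filter_filter] at h2
  have h3 : ((H.OCs_finite.toFinset).filter
        (fun cd => ¬IsHC P v cd.1 ∧ IsHC P v cd.2)).card =
      ((H.OCs_finite.toFinset).filter (fun cd => IsHC P v cd.1)).card := by
    refine Finset.card_bij' (fun cd _ => cd.swap) (fun cd _ => cd.swap) ?_ ?_ ?_ ?_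
    · intro cd hcd
      obtain ⟨hmem, hn1, h2'⟩ := Finset.mem_filter.mp hcd
      exact Finset.mem_filter.mpr
        ⟨H.OCs_finite.mem_toFinset.mpr (OCs_swap (H.OCs_finite.mem_toFinset.mp hmem)), h2'⟩
    · intro cd hcd
      obtain ⟨hmem, h1'⟩ := Finset.mem_filter.mp hcd
      have hOC := H.OCs_finite.mem_toFinset.mp hmem
      exact Finset.mem_filter.mpr ⟨H.OCs_finite.mem_toFinset.mpr (OCs_swap hOC),
        H.hc_not_hc2 hOC h1', h1'⟩
    · intro cd _
      exact Prod.swap_swap cd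
    · intro cd _
      exact Prod.swap_swap cd
  omega

end AP

theorem antipodal_drawing_is_Hill_drawing
    (k : ℕ) (hk : 3 ≤ k) (P : Set E3) (hPS : P ⊆ unitSphere)
    (hPfin : P.Finite) (hcard : P.ncard = k) (hgen : GenPos P)
    (v : E3 → E3) (hv : ∀ p ∈ P, ‖v p‖ = 1 ∧ ⟪p, v p⟫ = 0)
    (hdisj : ∀ p ∈ P, ∀ q ∈ P, p ≠ q →
      halfCircle p (v p) ∩ halfCircle q (v q) = ∅)
    (hgc : ∀ p ∈ P, ((Submodule.span ℝ {p, v p} : Set E3) ∩ unitSphere) ∩ phat P =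
      ({p, -p} : Set E3)) :
    (Set.ncard (crossingPairs (drawingCurves P v P)) : ℚ) =
      (k : ℚ) * ((k : ℚ) - 1) ^ 2 * ((k : ℚ) - 2) / 4 ∧
    (k : ℚ) * ((k : ℚ) - 1) ^ 2 * ((k : ℚ) - 2) / 4 = Hfun (2 * k) := by
  classical
  have H : AP.Good k P v := ⟨hk, hPS, hPfin, hcard, hgen, hv, hdisj, hgc⟩
  have c1 : ((k - 1 : ℕ) : ℚ) = (k : ℚ) - 1 := by
    rw [Nat.cast_sub (by omega : 1 ≤ k)]
    norm_num
  have c2 : ((k - 2 : ℕ) : ℚ) = (k : ℚ) - 2 := by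
    rw [Nat.cast_sub (by omega : 2 ≤ k)]
    norm_num
  have c3 : ((k - 3 : ℕ) : ℚ) = (k : ℚ) - 3 := by
    rw [Nat.cast_sub (by omega : 3 ≤ k)]
    norm_num
  constructor
  · have hPfc : H.hfin.toFinset.card = k := by
      rw [← Set.ncard_eq_toFinset_card _ H.hfin]
      exact hcard
    have h2 := H.ncard_OCs
    have h3 : (AP.OCs P v).ncard = (H.OCs_finite.toFinset).card :=
      Set.ncard_eq_toFinset_card _ H.OCs_finite
    have h4 := H.card_split
    have h5 := H.cardOA
    have h6 := H.cardOB
    rw [Finset.card_product, AP.card_dquads, Finset.card_univ, Fintype.card_bool,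
      hPfc] at h5
    rw [AP.card_dtriples, hPfc] at h6
    set N := (crossingPairs (drawingCurves P v P)).ncard with hN
    set A := ((H.OCs_finite.toFinset).filter
      (fun cd => ¬AP.IsHC P v cd.1 ∧ ¬AP.IsHC P v cd.2)).card with hA
    set B := ((H.OCs_finite.toFinset).filter (fun cd => AP.IsHC P v cd.1)).card with hB
    have e1 : 2 * N = A + 2 * B := by omega
    have e1Q : (2 : ℚ) * N = A + 2 * B := by exact_mod_cast e1
    have e5Q : ((k : ℚ) * ((k : ℚ) - 1)) * (((k : ℚ) - 2) * ((k : ℚ) - 3)) * 2 =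
        4 * A := by
      have := congrArg (Nat.cast : ℕ → ℚ) h5
      push_cast at this
      rw [c1, c2, c3] at this
      exact this
    have e6Q : (k : ℚ) * (((k : ℚ) - 1) * ((k : ℚ) - 2)) = 2 * B := by
      have := congrArg (Nat.cast : ℕ → ℚ) h6
      push_cast at this
      rw [c1, c2] at this
      exact this
    rw [eq_div_iff (by norm_num : (4 : ℚ) ≠ 0)]
    linear_combination (2 : ℚ) * e1Q - (1 / 2 : ℚ) * e5Q - 2 * e6Q
  · have d1 : 2 * k / 2 = k := by omega
    have d2 : (2 * k - 1) / 2 = k - 1 := by omega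
    have d3 : (2 * k - 2) / 2 = k - 1 := by omega
    have d4 : (2 * k - 3) / 2 = k - 2 := by omega
    rw [Hfun, d1, d2, d3, d4, c1, c2]
    ring

end
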